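/- arXiv:2006.05739 — 6 statements merged into one kernel-verified Lean document; each statement's English description precedes it below -/
import Mathlib

section
/- Let ρ be a positive definite complex n×n matrix, let T(X) = Σ_{i=1}^k A_i X A_i* with m×n complex matrices A₁,…,A_k satisfying Σ_{i=1}^k A_i* A_i ≤ I, and let σ be a positive semidefinite m×m matrix such that T(ρ)+σ is positive definite. Then for every complex n×n matrix X, Tr[ T(X) (T(ρ)+σ)^{-1} T(X)* ] ≤ Tr[ X ρ^{-1} X* ]. -/
open Matrix ComplexOrder

lemma trace_re_nonneg {N : Type*} [Fintype N] {M : Matrix N N ℂ} (hM : M.PosSemidef) :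
    0 ≤ M.trace.re := by
  classical
  rw [Matrix.trace]
  simp only [Matrix.diag, Complex.re_sum]
  refine Finset.sum_nonneg fun i _ => ?_
  have := hM.re_dotProduct_nonneg (Pi.single i 1)
  simpa [dotProduct, Pi.single_apply, apply_ite] using this

lemma fromBlocks_sum {N k : ℕ} (f g h j : Fin k → Matrix (Fin N) (Fin N) ℂ) :
    ∑ i, fromBlocks (f i) (g i) (h i) (j i) =
      fromBlocks (∑ i, f i) (∑ i, g i) (∑ i, h i) (∑ i, j i) := by
  ext a b
  cases a <;> cases b <;> simp [Matrix.sum_apply]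

lemma posSemidef_sum {N : Type*} [Fintype N] {k : ℕ} (f : Fin k → Matrix N N ℂ)
    (hf : ∀ i, (f i).PosSemidef) : (∑ i, f i).PosSemidef := by
  classical
  exact Finset.sum_induction f _ (fun a b ha hb => ha.add hb) Matrix.PosSemidef.zero
    (fun i _ => hf i)

/-- monotonicity of the RLD metric `Tr[X ρ⁻¹ X*]` under CPTNI maps together
with additive noise. -/
theorem stmt2 {n m k : ℕ} (ρ : Matrix (Fin n) (Fin n) ℂ) (hρ : ρ.PosDef)
    (A : Fin k → Matrix (Fin m) (Fin n) ℂ)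
    (hA : ((1 : Matrix (Fin n) (Fin n) ℂ) - ∑ i, (A i)ᴴ * A i).PosSemidef)
    (σ : Matrix (Fin m) (Fin m) ℂ) (hσ : σ.PosSemidef)
    (hTρσ : ((∑ i, A i * ρ * (A i)ᴴ) + σ).PosDef)
    (X : Matrix (Fin n) (Fin n) ℂ) :
    (((∑ i, A i * X * (A i)ᴴ) * ((∑ i, A i * ρ * (A i)ᴴ) + σ)⁻¹ *
        (∑ i, A i * X * (A i)ᴴ)ᴴ).trace).re ≤ ((X * ρ⁻¹ * Xᴴ).trace).re := by
  set S : Matrix (Fin m) (Fin m) ℂ := (∑ i, A i * ρ * (A i)ᴴ) + σ with hS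
  set Y : Matrix (Fin m) (Fin m) ℂ := ∑ i, A i * X * (A i)ᴴ with hY
  set W : Matrix (Fin n) (Fin n) ℂ := X * ρ⁻¹ * Xᴴ with hW
  set Z : Matrix (Fin m) (Fin m) ℂ := ∑ i, A i * W * (A i)ᴴ with hZ
  -- Step 1: the block matrix [[W, X],[Xᴴ, ρ]] is PSD
  haveI := hρ.isUnit.invertible
  haveI := hTρσ.isUnit.invertible
  have hM : (fromBlocks W X Xᴴ ρ).PosSemidef := by
    rw [PosDef.fromBlocks₂₂ W X hρ]
    simpa [hW] using (Matrix.PosSemidef.zero (n := Fin n) (R := ℂ))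
  -- Step 2: conjugate by blockdiag(A i, A i) and sum, add noise block
  have h1 : ∀ i : Fin k,
      (fromBlocks (A i * W * (A i)ᴴ) (A i * X * (A i)ᴴ)
        (A i * Xᴴ * (A i)ᴴ) (A i * ρ * (A i)ᴴ)).PosSemidef := by
    intro i
    have := hM.mul_mul_conjTranspose_same (fromBlocks (A i) 0 0 (A i))
    convert this using 1
    simp [fromBlocks_conjTranspose, fromBlocks_multiply]
  have h2 := posSemidef_sum _ h1
  rw [fromBlocks_sum] at h2
  obtain ⟨B, hB⟩ : ∃ B, σ = Bᴴ * B :=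
    by open scoped MatrixOrder in exact CStarAlgebra.nonneg_iff_eq_star_mul_self.mp hσ.nonneg
  have h3 : (fromBlocks 0 0 0 σ : Matrix (Fin m ⊕ Fin m) (Fin m ⊕ Fin m) ℂ).PosSemidef := by
    have : (fromBlocks 0 0 0 σ : Matrix (Fin m ⊕ Fin m) (Fin m ⊕ Fin m) ℂ)
        = (fromBlocks 0 0 0 B)ᴴ * (fromBlocks 0 0 0 B) := by
      rw [fromBlocks_conjTranspose, fromBlocks_multiply]
      simp [hB]
    rw [this]
    exact posSemidef_conjTranspose_mul_self _
  have hN := h2.add h3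
  rw [fromBlocks_add] at hN
  have hYH : (∑ i, A i * Xᴴ * (A i)ᴴ) + 0 = Yᴴ := by
    simp [hY, conjTranspose_sum, Matrix.conjTranspose_mul, Matrix.mul_assoc]
  rw [hYH] at hN
  have hN' : (fromBlocks (Z + 0) (Y + 0) Yᴴ S).PosSemidef := hN
  rw [add_zero, add_zero] at hN'
  -- Step 3: Schur complement
  have hSchur := (PosDef.fromBlocks₂₂ Z Y hTρσ).mp hN'
  have t1 : (Y * S⁻¹ * Yᴴ).trace.re ≤ Z.trace.re := by
    have := trace_re_nonneg hSchur
    rw [trace_sub, Complex.sub_re] at this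
    linarith
  -- Step 4: Tr Z ≤ Tr W
  have t2 : Z.trace.re ≤ W.trace.re := by
    have hZtr : Z.trace = ((∑ i, (A i)ᴴ * A i) * W).trace := by
      rw [hZ, trace_sum, Finset.sum_mul, trace_sum]
      refine Finset.sum_congr rfl fun i _ => ?_
      rw [Matrix.trace_mul_cycle]
    have hρi : (ρ⁻¹).PosSemidef := hρ.posSemidef.inv
    set R : Matrix (Fin n) (Fin n) ℂ := (by open scoped MatrixOrder in exact CFC.sqrt (ρ⁻¹)) with hR
    have hRR : R * R = ρ⁻¹ := by open scoped MatrixOrder in exact CFC.sqrt_mul_sqrt_self _ hρi.nonneg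
    have hRH : Rᴴ = R := by
      open scoped MatrixOrder in exact (CFC.sqrt_nonneg (ρ⁻¹)).posSemidef.isHermitian
    have hWV : W = (X * R) * (X * R)ᴴ := by
      rw [Matrix.conjTranspose_mul, hRH, hW, ← hRR]
      noncomm_ring
    have key : 0 ≤ (W - (∑ i, (A i)ᴴ * A i) * W).trace.re := by
      have : W - (∑ i, (A i)ᴴ * A i) * W
          = ((1 : Matrix (Fin n) (Fin n) ℂ) - ∑ i, (A i)ᴴ * A i) * ((X * R) * (X * R)ᴴ) := by
        rw [← hWV, sub_mul, one_mul]
      rw [this, ← Matrix.mul_assoc, Matrix.trace_mul_cycle]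
      exact trace_re_nonneg (hA.conjTranspose_mul_mul_same (X * R))
    rw [trace_sub, Complex.sub_re] at key
    rw [hZtr]
    linarith
  exact le_trans t1 t2
end

section
/- Let (K^(n))_{n≥1} be a family of CPTNI monotone metrics, let n ≥ 2, and let ρ = diag(p₁,…,pₙ) be a diagonal positive definite n×n matrix with Tr ρ ≤ 1. Then K^(n)_ρ(E₁₁, E₂₂) = 0, where E₁₁ and E₂₂ are the matrix units with a single 1 in positions (1,1) and (2,2) respectively. -/
open Matrix ComplexOrder

/-- Functional calculus for (Hermitian) matrices: apply `f` to each eigenvalue. -/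
noncomputable def herCFC {n : ℕ} (f : ℝ → ℝ) (A : Matrix (Fin n) (Fin n) ℂ) :
    Matrix (Fin n) (Fin n) ℂ :=
  if h : A.IsHermitian then
    (h.eigenvectorUnitary : Matrix (Fin n) (Fin n) ℂ) *
      Matrix.diagonal (fun i => (f (h.eigenvalues i) : ℂ)) *
      (star (h.eigenvectorUnitary : Matrix (Fin n) (Fin n) ℂ))
  else 0

/-- `f : (0,∞) → (0,∞)` is operator monotone. -/
def OperatorMonotone (f : ℝ → ℝ) : Prop :=
  (∀ x : ℝ, 0 < x → 0 < f x) ∧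
  ∀ (n : ℕ) (A B : Matrix (Fin n) (Fin n) ℂ), A.PosDef → B.PosDef →
    (B - A).PosSemidef → (herCFC f B - herCFC f A).PosSemidef

/-- `T` is completely positive and trace non-increasing. -/
def IsCPTNI {n m : ℕ} (T : Matrix (Fin n) (Fin n) ℂ → Matrix (Fin m) (Fin m) ℂ) : Prop :=
  ∃ (k : ℕ) (A : Fin k → Matrix (Fin m) (Fin n) ℂ),
    (∀ X, T X = ∑ i, A i * X * (A i)ᴴ) ∧
    ((1 : Matrix (Fin n) (Fin n) ℂ) - ∑ i, (A i)ᴴ * A i).PosSemidef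

/-- `K` is an inner product on the space of `n × n` complex matrices. -/
def IsInnerProduct {n : ℕ}
    (K : Matrix (Fin n) (Fin n) ℂ → Matrix (Fin n) (Fin n) ℂ → ℂ) : Prop :=
  (∀ X Y Z, K (X + Y) Z = K X Z + K Y Z) ∧
  (∀ X Y Z, K X (Y + Z) = K X Y + K X Z) ∧
  (∀ (c : ℂ) (X Y : Matrix (Fin n) (Fin n) ℂ), K X (c • Y) = c * K X Y) ∧
  (∀ (c : ℂ) (X Y : Matrix (Fin n) (Fin n) ℂ), K (c • X) Y = (starRingEnd ℂ) c * K X Y) ∧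
  (∀ X Y, K Y X = (starRingEnd ℂ) (K X Y)) ∧
  (∀ X, X ≠ 0 → 0 < (K X X).re)

/-- A family of CPTNI monotone metrics. -/
def MonotoneMetricFamily
    (K : (n : ℕ) → Matrix (Fin n) (Fin n) ℂ →
      Matrix (Fin n) (Fin n) ℂ → Matrix (Fin n) (Fin n) ℂ → ℂ) : Prop :=
  (∀ (n : ℕ) (ρ : Matrix (Fin n) (Fin n) ℂ), ρ.PosDef → ρ.trace.re ≤ 1 →
    IsInnerProduct (K n ρ)) ∧
  (∀ (n m : ℕ) (T : Matrix (Fin n) (Fin n) ℂ → Matrix (Fin m) (Fin m) ℂ), IsCPTNI T →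
    ∀ (σ : Matrix (Fin m) (Fin m) ℂ), σ.PosSemidef →
    ∀ (ρ : Matrix (Fin n) (Fin n) ℂ), ρ.PosDef → ρ.trace.re ≤ 1 →
    (T ρ + σ).PosDef → (T ρ + σ).trace.re ≤ 1 →
    ∀ (X : Matrix (Fin n) (Fin n) ℂ),
      (K m (T ρ + σ) (T X) (T X)).re ≤ (K n ρ X X).re)


lemma stmt5_conjT {n : ℕ} (i0 : Fin n) :
    (Matrix.single i0 i0 (1:ℂ))ᴴ = Matrix.single i0 i0 1 := by
  ext a b
  by_cases ha : a = i0 <;> by_cases hb : b = i0 <;>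
    simp_all [Matrix.conjTranspose_apply, Matrix.single, eq_comm]

lemma stmt5_oneSub {n : ℕ} (i0 : Fin n) :
    (1 : Matrix (Fin n) (Fin n) ℂ) - Matrix.single i0 i0 1
      = Matrix.diagonal (fun i => if i = i0 then 0 else 1) := by
  ext a b
  by_cases hab : a = b <;> by_cases ha : a = i0 <;>
    simp_all [Matrix.single, Matrix.one_apply, Matrix.diagonal, eq_comm]

lemma stmt5_sandwich {n : ℕ} (i0 : Fin n) (p : Fin n → ℝ) :
    Matrix.single i0 i0 (1:ℂ) * (Matrix.diagonal (fun i => (p i : ℂ)))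
        * Matrix.single i0 i0 1
      = Matrix.single i0 i0 ((p i0 : ℂ)) := by
  have h1 : Matrix.single i0 i0 (1:ℂ) * (Matrix.diagonal (fun i => (p i : ℂ)))
      = Matrix.single i0 i0 ((p i0 : ℂ)) := by
    ext a k
    rw [Matrix.mul_diagonal]
    by_cases ha : i0 = a <;> by_cases hk : i0 = k <;>
      simp_all [Matrix.single]
  rw [h1, Matrix.single_mul_single_same, mul_one]

lemma stmt5_addSigma {n : ℕ} (i0 : Fin n) (p : Fin n → ℝ) :
    Matrix.single i0 i0 ((p i0 : ℂ))
        + Matrix.diagonal (fun i => if i = i0 then 0 else (p i : ℂ))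
      = Matrix.diagonal (fun i => (p i : ℂ)) := by
  ext a b
  by_cases hab : a = b <;> by_cases ha : a = i0 <;>
    simp_all [Matrix.single, Matrix.diagonal, eq_comm]

/-- Auxiliary: if a sesquilinear positive form satisfies
`(G E1 E1).re ≤ (G (E1 + c•E2) (E1 + c•E2)).re` for all `c`, then `G E1 E2 = 0`. -/
lemma stmt5_aux {n : ℕ} (G : Matrix (Fin n) (Fin n) ℂ → Matrix (Fin n) (Fin n) ℂ → ℂ)
    (addL : ∀ X Y Z, G (X + Y) Z = G X Z + G Y Z)
    (addR : ∀ X Y Z, G X (Y + Z) = G X Y + G X Z)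
    (smulR : ∀ (c : ℂ) X Y, G X (c • Y) = c * G X Y)
    (smulL : ∀ (c : ℂ) X Y, G (c • X) Y = (starRingEnd ℂ) c * G X Y)
    (hsymm : ∀ X Y, G Y X = (starRingEnd ℂ) (G X Y))
    (E1 E2 : Matrix (Fin n) (Fin n) ℂ)
    (hK22 : 0 < (G E2 E2).re)
    (hmono' : ∀ c : ℂ, (G E1 E1).re ≤ (G (E1 + c • E2) (E1 + c • E2)).re) :
    G E1 E2 = 0 := by
  set κ : ℂ := G E1 E2 with hκ
  have expand : ∀ c : ℂ, (G (E1 + c • E2) (E1 + c • E2)).re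
      = (G E1 E1).re + 2 * (c * κ).re + Complex.normSq c * (G E2 E2).re := by
    intro c
    rw [addL, addR, addR, smulR, smulL, smulL, smulR]
    have h1 : (starRingEnd ℂ) c * G E2 E1 = (starRingEnd ℂ) (c * κ) := by
      rw [hsymm E1 E2, ← _root_.map_mul]
    have h2 : (starRingEnd ℂ) c * (c * G E2 E2) = (Complex.normSq c : ℂ) * G E2 E2 := by
      rw [← mul_assoc, mul_comm ((starRingEnd ℂ) c) c, Complex.mul_conj]
    rw [h1, h2]
    simp [Complex.add_re, Complex.conj_re, Complex.re_ofReal_mul]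
    ring
  have key : ∀ c : ℂ, 0 ≤ 2 * (c * κ).re + Complex.normSq c * (G E2 E2).re := by
    intro c
    have := hmono' c
    rw [expand c] at this
    linarith
  by_contra hne0
  have hκns : 0 < Complex.normSq κ := by
    rcases lt_or_eq_of_le (Complex.normSq_nonneg κ) with h | h
    · exact h
    · exact absurd (Complex.normSq_eq_zero.mp h.symm) hne0
  set r : ℝ := (G E2 E2).re with hr
  have := key (((-r⁻¹ : ℝ) : ℂ) * (starRingEnd ℂ) κ)
  have hcκ : ((((-r⁻¹ : ℝ) : ℂ) * (starRingEnd ℂ) κ) * κ).re = -r⁻¹ * Complex.normSq κ := by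
    rw [mul_assoc, mul_comm ((starRingEnd ℂ) κ) κ, Complex.mul_conj]
    simp [Complex.re_ofReal_mul]
  have hns : Complex.normSq (((-r⁻¹ : ℝ) : ℂ) * (starRingEnd ℂ) κ)
      = r⁻¹ * r⁻¹ * Complex.normSq κ := by
    rw [Complex.normSq_mul, Complex.normSq_conj]
    simp [Complex.normSq_ofReal]
  rw [hcκ, hns] at this
  have hrpos : 0 < r := hK22
  have h1 : r⁻¹ * r⁻¹ * Complex.normSq κ * r = r⁻¹ * Complex.normSq κ := by
    field_simp
  rw [h1] at this
  have h2 : 0 < r⁻¹ * Complex.normSq κ := by positivity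
  linarith

/-- for a diagonal positive definite state, the matrix units `E₁₁` and `E₂₂`
are orthogonal with respect to any CPTNI monotone metric. -/
theorem stmt5
    (K : (n : ℕ) → Matrix (Fin n) (Fin n) ℂ →
      Matrix (Fin n) (Fin n) ℂ → Matrix (Fin n) (Fin n) ℂ → ℂ)
    (hK : MonotoneMetricFamily K)
    (n : ℕ) (hn : 2 ≤ n) (p : Fin n → ℝ)
    (hρ : (Matrix.diagonal (fun i => (p i : ℂ))).PosDef)
    (htr : (Matrix.diagonal (fun i => (p i : ℂ))).trace.re ≤ 1) :
    K n (Matrix.diagonal (fun i => (p i : ℂ)))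
      (Matrix.single (⟨0, by omega⟩ : Fin n) (⟨0, by omega⟩ : Fin n) 1)
      (Matrix.single (⟨1, by omega⟩ : Fin n) (⟨1, by omega⟩ : Fin n) 1) = 0 := by
  obtain ⟨hIP, hMono⟩ := hK
  have hn0 : (0:ℕ) < n := by omega
  have hn1 : (1:ℕ) < n := by omega
  set ρ : Matrix (Fin n) (Fin n) ℂ := Matrix.diagonal (fun i => (p i : ℂ)) with hρdef
  let i0 : Fin n := ⟨0, hn0⟩
  let i1 : Fin n := ⟨1, hn1⟩
  let E1 : Matrix (Fin n) (Fin n) ℂ := Matrix.single i0 i0 1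
  let E2 : Matrix (Fin n) (Fin n) ℂ := Matrix.single i1 i1 1
  show K n ρ E1 E2 = 0
  have hne : i0 ≠ i1 := by simp [i0, i1, Fin.ext_iff]
  have hp : ∀ i, 0 < p i := fun i =>
    Complex.zero_lt_real.mp (Matrix.posDef_diagonal_iff.mp hρ i)
  have hE1H : E1ᴴ = E1 := stmt5_conjT i0
  set T : Matrix (Fin n) (Fin n) ℂ → Matrix (Fin n) (Fin n) ℂ := fun X => E1 * X * E1 with hTdef
  have hT : IsCPTNI T := by
    refine ⟨1, fun _ => E1, fun X => by rw [Fin.sum_univ_one, hE1H], ?_⟩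
    have hsum : (∑ _i : Fin 1, E1ᴴ * E1) = E1 := by
      rw [Fin.sum_univ_one, hE1H]
      simp [E1]
    rw [hsum, stmt5_oneSub i0]
    refine Matrix.posSemidef_diagonal_iff.mpr fun i => ?_
    split
    · exact le_refl _
    · exact zero_le_one
  set σ : Matrix (Fin n) (Fin n) ℂ :=
    Matrix.diagonal (fun i => if i = i0 then 0 else (p i : ℂ)) with hσdef
  have hσ : σ.PosSemidef := by
    refine Matrix.posSemidef_diagonal_iff.mpr fun i => ?_
    split
    · exact le_refl _
    · exact Complex.zero_le_real.mpr (hp i).le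
  have hTρ : T ρ = Matrix.single i0 i0 ((p i0 : ℂ)) := stmt5_sandwich i0 p
  have hTρσ : T ρ + σ = ρ := by rw [hTρ]; exact stmt5_addSigma i0 p
  have hTX : ∀ c : ℂ, T (E1 + c • E2) = E1 := by
    intro c
    show Matrix.single i0 i0 (1:ℂ) *
        (Matrix.single i0 i0 1 + c • Matrix.single i1 i1 1) *
        Matrix.single i0 i0 1 = Matrix.single i0 i0 1
    rw [mul_add, Matrix.mul_smul, Matrix.single_mul_single_of_ne (h := hne),
      Matrix.single_mul_single_same, smul_zero, add_zero, mul_one,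
      Matrix.single_mul_single_same, mul_one]
  have hmono2 : ∀ c : ℂ,
      (K n ρ E1 E1).re ≤ (K n ρ (E1 + c • E2) (E1 + c • E2)).re := by
    intro c
    have h := hMono n n T hT σ hσ ρ hρ htr (by rw [hTρσ]; exact hρ)
      (by rw [hTρσ]; exact htr) (E1 + c • E2)
    rwa [hTρσ, hTX c] at h
  obtain ⟨addL, addR, smulR, smulL, hsymm, hpos⟩ := hIP n ρ hρ htr
  have hE2ne : E2 ≠ 0 := by
    intro h
    have := congrFun (congrFun h i1) i1
    simp [E2, Matrix.single] at this
  exact stmt5_aux (K n ρ) addL addR smulR smulL hsymm E1 E2 (hpos E2 hE2ne) hmono2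
end

section
/- Let (K^(n))_{n≥1} be a family of CPTNI monotone metrics, let n ≥ 1, and let ρ = diag(p₁,…,pₙ) be a diagonal positive definite n×n matrix with Tr ρ ≤ 1 and p₁ ≤ 1/2. Then K^(n)_ρ(E₁₁^(n), E₁₁^(n)) = K^(2)_{diag(p₁,p₁)}(E₁₂^(2), E₁₂^(2)), where E₁₁^(n) is the n×n matrix unit with a single 1 in position (1,1) and E₁₂^(2) is the 2×2 matrix unit with a single 1 in position (1,2). -/
open Matrix ComplexOrder

/-! ### Auxiliary machinery -/

namespace Stmt8Aux

/-- Sandwiching by a (rectangular) matrix unit. -/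
lemma std_sandwich {n m : ℕ} (a : Fin m) (b : Fin n) (X : Matrix (Fin n) (Fin n) ℂ) :
    Matrix.single a b (1:ℂ) * X * (Matrix.single a b (1:ℂ))ᴴ
      = X b b • Matrix.single a a 1 := by
  ext i j
  by_cases hi : a = i <;> by_cases hj : a = j <;>
    simp [Matrix.mul_apply, Matrix.single, Matrix.conjTranspose_apply,
      ite_and, hi, hj, Finset.mul_sum, Finset.sum_mul, apply_ite (starRingEnd ℂ),
      mul_ite, Finset.sum_ite_eq]

lemma std_gram {n m : ℕ} (a : Fin m) (b : Fin n) :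
    (Matrix.single a b (1:ℂ))ᴴ * Matrix.single a b (1:ℂ) = Matrix.single b b (1:ℂ) := by
  ext i j
  by_cases hi : b = i <;> by_cases hj : b = j <;>
    simp [Matrix.mul_apply, Matrix.single, Matrix.conjTranspose_apply,
      ite_and, hi, hj]

lemma std_psd {n m : ℕ} (a : Fin m) (b : Fin n) :
    ((1 : Matrix (Fin n) (Fin n) ℂ)
      - (Matrix.single a b (1:ℂ))ᴴ * Matrix.single a b (1:ℂ)).PosSemidef := by
  rw [std_gram]
  have h : (1 : Matrix (Fin n) (Fin n) ℂ) - Matrix.single b b (1:ℂ)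
      = Matrix.diagonal (fun i => if i = b then 0 else 1) := by
    ext i j
    by_cases hi : i = j
    · subst hi
      by_cases h : b = i <;>
        simp [Matrix.one_apply, Matrix.single, Matrix.diagonal, h, ite_and,
          (show (i = b) ↔ (b = i) from eq_comm)]
    · simp [Matrix.one_apply, Matrix.single, Matrix.diagonal, hi, ite_and]
      intro h1 h2; exact absurd (h1.symm.trans h2) hi
  rw [h]
  exact posSemidef_diagonal_iff.mpr fun i => by
    by_cases h : i = b <;> simp [h]


lemma std_diag {n : ℕ} (b : Fin n) (c : ℂ) :
    Matrix.single b b c = Matrix.diagonal (fun i => if i = b then c else 0) := by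
  ext i j
  by_cases h2 : i = j
  · subst h2
    by_cases h3 : i = b
    · subst h3; simp [Matrix.single, Matrix.diagonal]
    · have h3' : ¬ b = i := fun hh => h3 hh.symm
      simp [Matrix.single, Matrix.diagonal, h3, h3']
  · have hne : ¬ (b = i ∧ b = j) := fun hh => h2 (hh.1.symm.trans hh.2)
    simp [Matrix.single, Matrix.diagonal, h2, hne]

/-- The basic monotonicity inequality for a single-Kraus CPTNI map. -/
lemma mono1
    {K : (n : ℕ) → Matrix (Fin n) (Fin n) ℂ →
      Matrix (Fin n) (Fin n) ℂ → Matrix (Fin n) (Fin n) ℂ → ℂ}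
    (hK : MonotoneMetricFamily K) {n m : ℕ} (A : Matrix (Fin m) (Fin n) ℂ)
    (hA : ((1 : Matrix (Fin n) (Fin n) ℂ) - Aᴴ * A).PosSemidef)
    {ρ : Matrix (Fin n) (Fin n) ℂ} (hρ : ρ.PosDef) (hρt : ρ.trace.re ≤ 1)
    (σ : Matrix (Fin m) (Fin m) ℂ) (hσ : σ.PosSemidef)
    {ρ' : Matrix (Fin m) (Fin m) ℂ} (hρ' : ρ'.PosDef) (hρ't : ρ'.trace.re ≤ 1)
    (hstate : A * ρ * Aᴴ + σ = ρ')
    (X : Matrix (Fin n) (Fin n) ℂ) :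
    (K m ρ' (A * X * Aᴴ) (A * X * Aᴴ)).re ≤ (K n ρ X X).re := by
  have hT : IsCPTNI (fun Y : Matrix (Fin n) (Fin n) ℂ => A * Y * Aᴴ) := by
    refine ⟨1, ![A], fun Y => ?_, ?_⟩
    · simp [Fin.sum_univ_one]
    · simpa [Fin.sum_univ_one] using hA
  have h := hK.2 n m _ hT σ hσ ρ hρ hρt
    (by simpa [hstate] using hρ') (by simpa [hstate] using hρ't) X
  simpa [hstate] using h

noncomputable def E11 : Matrix (Fin 2) (Fin 2) ℂ := Matrix.single 0 0 1
noncomputable def E12 : Matrix (Fin 2) (Fin 2) ℂ := Matrix.single 0 1 1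
noncomputable def E21 : Matrix (Fin 2) (Fin 2) ℂ := Matrix.single 1 0 1
noncomputable def E22 : Matrix (Fin 2) (Fin 2) ℂ := Matrix.single 1 1 1


lemma E11_lit : E11 = !![(1:ℂ),0;0,0] := by
  ext i j; fin_cases i <;> fin_cases j <;> simp [E11, Matrix.single]
lemma E12_lit : E12 = !![(0:ℂ),1;0,0] := by
  ext i j; fin_cases i <;> fin_cases j <;> simp [E12, Matrix.single]
lemma E21_lit : E21 = !![(0:ℂ),0;1,0] := by
  ext i j; fin_cases i <;> fin_cases j <;> simp [E21, Matrix.single]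
lemma E22_lit : E22 = !![(0:ℂ),0;0,1] := by
  ext i j; fin_cases i <;> fin_cases j <;> simp [E22, Matrix.single]

/-- Real-coefficient 2×2 matrix. -/
noncomputable def Mr (w x y z : ℝ) : Matrix (Fin 2) (Fin 2) ℂ := !![(w:ℂ), x; y, z]

lemma decomp (w x y z : ℂ) :
    !![w, x; y, z] = w • E11 + x • E12 + y • E21 + z • E22 := by
  ext i j
  fin_cases i <;> fin_cases j <;>
    simp [E11, E12, E21, E22, Matrix.single]

section expand
variable (k : Matrix (Fin 2) (Fin 2) ℂ → Matrix (Fin 2) (Fin 2) ℂ → ℂ)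
  (h1 : ∀ X Y Z, k (X + Y) Z = k X Z + k Y Z)
  (h2 : ∀ X Y Z, k X (Y + Z) = k X Y + k X Z)
  (h3 : ∀ (c : ℂ) X Y, k X (c • Y) = c * k X Y)
  (h4 : ∀ (c : ℂ) X Y, k (c • X) Y = (starRingEnd ℂ) c * k X Y)

include h1 h2 h3 h4 in
lemma re_expand (w x y z : ℝ) :
    (k (Mr w x y z) (Mr w x y z)).re =
      w*w*(k E11 E11).re + w*x*(k E11 E12).re + w*y*(k E11 E21).re + w*z*(k E11 E22).re
    + x*w*(k E12 E11).re + x*x*(k E12 E12).re + x*y*(k E12 E21).re + x*z*(k E12 E22).re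
    + y*w*(k E21 E11).re + y*x*(k E21 E12).re + y*y*(k E21 E21).re + y*z*(k E21 E22).re
    + z*w*(k E22 E11).re + z*x*(k E22 E12).re + z*y*(k E22 E21).re + z*z*(k E22 E22).re := by
  rw [Mr, decomp]
  simp only [h1, h2, h3, h4, Complex.conj_ofReal]
  simp only [Complex.add_re, Complex.mul_re, Complex.ofReal_re, Complex.ofReal_im]
  ring

include h1 h2 h3 h4 in
lemma re_expand_I :
    (k !![0, -Complex.I; Complex.I, 0] !![0, -Complex.I; Complex.I, 0]).re =
      (k E12 E12).re + (k E21 E21).re - (k E12 E21).re - (k E21 E12).re := by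
  rw [decomp]
  simp only [h1, h2, h3, h4, map_neg, Complex.conj_I, map_zero]
  simp only [Complex.add_re, Complex.add_im, Complex.mul_re, Complex.mul_im,
    Complex.neg_re, Complex.neg_im, Complex.I_re, Complex.I_im,
    Complex.zero_re, Complex.zero_im]
  ring

end expand

end Stmt8Aux

set_option maxHeartbeats 2000000 in
open Stmt8Aux in
/-- for a diagonal positive definite state,
`K ρ E₁₁ E₁₁ = K² (diag (p₁, p₁)) E₁₂ E₁₂`. -/
theorem stmt8
    (K : (n : ℕ) → Matrix (Fin n) (Fin n) ℂ →
      Matrix (Fin n) (Fin n) ℂ → Matrix (Fin n) (Fin n) ℂ → ℂ)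
    (hK : MonotoneMetricFamily K)
    (n : ℕ) (hn : 1 ≤ n) (p : Fin n → ℝ)
    (hρ : (Matrix.diagonal (fun i => (p i : ℂ))).PosDef)
    (htr : (Matrix.diagonal (fun i => (p i : ℂ))).trace.re ≤ 1)
    (hp₁ : p ⟨0, by omega⟩ ≤ 1 / 2) :
    K n (Matrix.diagonal (fun i => (p i : ℂ)))
      (Matrix.single (⟨0, by omega⟩ : Fin n) (⟨0, by omega⟩ : Fin n) 1)
      (Matrix.single (⟨0, by omega⟩ : Fin n) (⟨0, by omega⟩ : Fin n) 1) =
    K 2 (Matrix.diagonal ![(p ⟨0, by omega⟩ : ℂ), (p ⟨0, by omega⟩ : ℂ)])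
      (Matrix.single 0 1 1) (Matrix.single 0 1 1) := by
  classical
  -- notation
  set i0 : Fin n := ⟨0, by omega⟩ with hi0def
  set p0 : ℝ := p i0 with hp0def
  set ρ : Matrix (Fin n) (Fin n) ℂ := Matrix.diagonal (fun i => (p i : ℂ)) with hρdef
  set ρ' : Matrix (Fin 2) (Fin 2) ℂ := Matrix.diagonal ![(p0:ℂ), (p0:ℂ)] with hρ'def
  set En : Matrix (Fin n) (Fin n) ℂ := Matrix.single i0 i0 1 with hEndef
  have hpi : ∀ i, 0 < p i := fun i =>
    Complex.zero_lt_real.mp ((Matrix.posDef_diagonal_iff.mp hρ) i)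
  have hp0 : 0 < p0 := hpi i0
  have hp0half : p0 ≤ 1/2 := hp₁
  have hρ'pd : ρ'.PosDef := Matrix.posDef_diagonal_iff.mpr (by
    intro i; fin_cases i <;> simpa using Complex.zero_lt_real.mpr hp0)
  have hρ'tr : ρ'.trace.re ≤ 1 := by
    rw [hρ'def, Matrix.trace_diagonal]
    rw [Fin.sum_univ_two]
    simp only [Matrix.cons_val_zero, Matrix.cons_val_one, Matrix.head_cons]
    rw [Complex.add_re, Complex.ofReal_re]
    linarith
  obtain ⟨k1, k2, k3, k4, k5, -⟩ := hK.1 2 ρ' hρ'pd hρ'tr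
  obtain ⟨-, -, -, -, k5n, -⟩ := hK.1 n ρ hρ htr
  -- values K X X are real
  have im0 : ∀ X, (K 2 ρ' X X).im = 0 := fun X => by
    have h : (K 2 ρ' X X).im = -(K 2 ρ' X X).im := by
      conv_lhs => rw [k5 X X]
      exact Complex.conj_im _
    linarith
  have im0n : ∀ X, (K n ρ X X).im = 0 := fun X => by
    have h : (K n ρ X X).im = -(K n ρ X X).im := by
      conv_lhs => rw [k5n X X]
      exact Complex.conj_im _
    linarith
  have creRe : ∀ X Y, (K 2 ρ' Y X).re = (K 2 ρ' X Y).re := fun X Y => by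
    rw [k5 X Y]; exact Complex.conj_re _
  -- invariance under unitary conjugation
  have hρ'one : ρ' = (p0:ℂ) • (1 : Matrix (Fin 2) (Fin 2) ℂ) := by
    ext i j
    fin_cases i <;> fin_cases j <;>
      simp [hρ'def, Matrix.diagonal, Matrix.one_apply]
  have uniEq : ∀ (U : Matrix (Fin 2) (Fin 2) ℂ), Uᴴ * U = 1 → U * Uᴴ = 1 →
      ∀ X, (K 2 ρ' (U * X * Uᴴ) (U * X * Uᴴ)).re = (K 2 ρ' X X).re := by
    intro U hU1 hU2 X
    have hstate : U * ρ' * Uᴴ + 0 = ρ' := by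
      rw [hρ'one, Matrix.mul_smul, Matrix.smul_mul, Matrix.mul_one, hU2, add_zero]
    have le1 := mono1 hK U (by rw [hU1, sub_self]; exact Matrix.PosSemidef.zero)
      hρ'pd hρ'tr 0 Matrix.PosSemidef.zero hρ'pd hρ'tr hstate X
    have hstate2 : Uᴴ * ρ' * (Uᴴ)ᴴ + 0 = ρ' := by
      rw [Matrix.conjTranspose_conjTranspose, hρ'one, Matrix.mul_smul,
        Matrix.smul_mul, Matrix.mul_one, hU1, add_zero]
    have hback : Uᴴ * (U * X * Uᴴ) * (Uᴴ)ᴴ = X := by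
      rw [Matrix.conjTranspose_conjTranspose]
      calc Uᴴ * (U * X * Uᴴ) * U = (Uᴴ * U) * X * (Uᴴ * U) := by
            noncomm_ring
        _ = X := by rw [hU1]; simp
    have le2 := mono1 hK Uᴴ
      (by rw [Matrix.conjTranspose_conjTranspose, hU2, sub_self]
          exact Matrix.PosSemidef.zero)
      hρ'pd hρ'tr 0 Matrix.PosSemidef.zero hρ'pd hρ'tr hstate2 (U * X * Uᴴ)
    rw [hback] at le2
    exact le_antisymm le1 le2

  -- ### Step 1: K n ρ En En  =  K 2 ρ' E11 E11
  have hσ1psd : (Matrix.diagonal ![(0:ℂ), (p0:ℂ)]).PosSemidef := by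
    refine posSemidef_diagonal_iff.mpr fun i => ?_
    fin_cases i
    · simp
    · simpa using Complex.zero_le_real.mpr hp0.le
  have hstate0 : (p0:ℂ) • Matrix.single (0:Fin 2) (0:Fin 2) (1:ℂ)
      + Matrix.diagonal ![(0:ℂ), (p0:ℂ)] = ρ' := by
    ext i j
    fin_cases i <;> fin_cases j <;>
      simp [hρ'def, Matrix.single, Matrix.diagonal]
  have hM1state : Matrix.single (0:Fin 2) i0 (1:ℂ) * ρ * (Matrix.single (0:Fin 2) i0 (1:ℂ))ᴴ
      + Matrix.diagonal ![(0:ℂ), (p0:ℂ)] = ρ' := by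
    rw [std_sandwich]
    have hρ00 : ρ i0 i0 = (p0:ℂ) := by rw [hρdef]; simp [hp0def]
    rw [hρ00]
    exact hstate0
  have hM1 := mono1 hK (Matrix.single (0:Fin 2) i0 (1:ℂ)) (std_psd _ _) hρ htr _
      hσ1psd hρ'pd hρ'tr hM1state En
  rw [std_sandwich, show En i0 i0 = (1:ℂ) from by simp [hEndef, Matrix.single],
    one_smul, show (Matrix.single (0:Fin 2) (0:Fin 2) (1:ℂ)) = E11 from rfl] at hM1
  -- reverse direction
  have hσ2psd : (Matrix.diagonal (fun i => if i = i0 then 0 else (p i:ℂ))).PosSemidef := by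
    refine posSemidef_diagonal_iff.mpr fun i => ?_
    by_cases h : i = i0
    · simp [h]
    · simpa [h] using Complex.zero_le_real.mpr (hpi i).le
  have hM2state : Matrix.single i0 (0:Fin 2) (1:ℂ) * ρ' * (Matrix.single i0 (0:Fin 2) (1:ℂ))ᴴ
      + Matrix.diagonal (fun i => if i = i0 then 0 else (p i:ℂ)) = ρ := by
    rw [std_sandwich]
    have h00 : ρ' 0 0 = (p0:ℂ) := by rw [hρ'def]; simp
    rw [h00, std_diag, hρdef]
    ext i j
    by_cases h1 : i = j
    · subst h1
      by_cases h2 : i = i0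
      · subst h2
        simp [Matrix.diagonal_apply, Matrix.smul_apply, hp0def]
      · simp [Matrix.diagonal_apply, Matrix.smul_apply, h2]
    · simp [Matrix.diagonal_apply, Matrix.smul_apply, h1]
  have hM2 := mono1 hK (Matrix.single i0 (0:Fin 2) (1:ℂ)) (std_psd _ _) hρ'pd hρ'tr _
      hσ2psd hρ htr hM2state E11
  rw [std_sandwich, show E11 (0:Fin 2) (0:Fin 2) = (1:ℂ) from by simp [E11, Matrix.single],
    one_smul, show Matrix.single i0 i0 (1:ℂ) = En from rfl] at hM2
  have hFa : (K n ρ En En).re = (K 2 ρ' E11 E11).re := le_antisymm hM2 hM1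
  -- ### Step 2: (K 2 ρ' E11 E22).re = 0
  have hM3state : Matrix.single (0:Fin 2) (0:Fin 2) (1:ℂ) * ρ'
      * (Matrix.single (0:Fin 2) (0:Fin 2) (1:ℂ))ᴴ
      + Matrix.diagonal ![(0:ℂ), (p0:ℂ)] = ρ' := by
    rw [std_sandwich, show ρ' 0 0 = (p0:ℂ) from by rw [hρ'def]; simp]
    exact hstate0
  have hTineq : ∀ T : ℝ, 0 ≤ 2*T*(K 2 ρ' E11 E22).re + (K 2 ρ' E22 E22).re := by
    intro T
    have h := mono1 hK (Matrix.single (0:Fin 2) (0:Fin 2) (1:ℂ)) (std_psd _ _)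
      hρ'pd hρ'tr _ hσ1psd hρ'pd hρ'tr hM3state (Mr T 0 0 1)
    rw [std_sandwich, show (Mr T 0 0 1) 0 0 = (T:ℂ) from by simp [Mr]] at h
    have hL : (K 2 ρ' ((T:ℂ) • Matrix.single 0 0 1) ((T:ℂ) • Matrix.single 0 0 1)).re
        = T*T*(K 2 ρ' E11 E11).re := by
      rw [show (Matrix.single (0:Fin 2) (0:Fin 2) (1:ℂ)) = E11 from rfl, k3, k4,
        Complex.conj_ofReal]
      simp only [Complex.mul_re, Complex.mul_im, Complex.ofReal_re, Complex.ofReal_im]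
      ring
    rw [hL, re_expand (K 2 ρ') k1 k2 k3 k4 T 0 0 1, creRe E11 E22] at h
    linarith
  have hr : (K 2 ρ' E11 E22).re = 0 := by
    by_contra h0
    have h := hTineq (-((K 2 ρ' E22 E22).re + 1) / (2 * (K 2 ρ' E11 E22).re))
    have key : 2 * (-((K 2 ρ' E22 E22).re + 1) / (2 * (K 2 ρ' E11 E22).re))
        * (K 2 ρ' E11 E22).re = -((K 2 ρ' E22 E22).re + 1) := by
      field_simp
    rw [key] at h
    linarith

  -- ### Step 3: swap symmetry
  have hW1 : (!![0,1;1,0] : Matrix (Fin 2) (Fin 2) ℂ)ᴴ * !![0,1;1,0] = 1 := by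
    ext i j
    fin_cases i <;> fin_cases j <;>
      simp [Matrix.mul_apply, Fin.sum_univ_two, Matrix.conjTranspose_apply, Matrix.one_apply]
  have hW2 : (!![0,1;1,0] : Matrix (Fin 2) (Fin 2) ℂ)
      * (!![0,1;1,0] : Matrix (Fin 2) (Fin 2) ℂ)ᴴ = 1 := by
    ext i j
    fin_cases i <;> fin_cases j <;>
      simp [Matrix.mul_apply, Fin.sum_univ_two, Matrix.conjTranspose_apply, Matrix.one_apply]
  have hWe11 : (!![0,1;1,0] : Matrix (Fin 2) (Fin 2) ℂ) * E11
      * (!![0,1;1,0] : Matrix (Fin 2) (Fin 2) ℂ)ᴴ = E22 := by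
    rw [E11_lit, E22_lit]
    ext i j
    fin_cases i <;> fin_cases j <;>
      simp [Matrix.mul_apply, Fin.sum_univ_two, Matrix.conjTranspose_apply]
  have ha2 : (K 2 ρ' E22 E22).re = (K 2 ρ' E11 E11).re := by
    have h := uniEq _ hW1 hW2 E11
    rw [hWe11] at h
    exact h
  have hWe12 : (!![0,1;1,0] : Matrix (Fin 2) (Fin 2) ℂ) * E12
      * (!![0,1;1,0] : Matrix (Fin 2) (Fin 2) ℂ)ᴴ = E21 := by
    rw [E12_lit, E21_lit]
    ext i j
    fin_cases i <;> fin_cases j <;>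
      simp [Matrix.mul_apply, Fin.sum_univ_two, Matrix.conjTranspose_apply]
  have hb2 : (K 2 ρ' E21 E21).re = (K 2 ρ' E12 E12).re := by
    have h := uniEq _ hW1 hW2 E12
    rw [hWe12] at h
    exact h
  -- ### Step 4: phase (sign) symmetry kills diagonal/off-diagonal cross terms
  have hV1 : (!![1,0;0,-1] : Matrix (Fin 2) (Fin 2) ℂ)ᴴ * !![1,0;0,-1] = 1 := by
    ext i j
    fin_cases i <;> fin_cases j <;>
      simp [Matrix.mul_apply, Fin.sum_univ_two, Matrix.conjTranspose_apply, Matrix.one_apply]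
  have hV2 : (!![1,0;0,-1] : Matrix (Fin 2) (Fin 2) ℂ)
      * (!![1,0;0,-1] : Matrix (Fin 2) (Fin 2) ℂ)ᴴ = 1 := by
    ext i j
    fin_cases i <;> fin_cases j <;>
      simp [Matrix.mul_apply, Fin.sum_univ_two, Matrix.conjTranspose_apply, Matrix.one_apply]
  have hcross1 : (K 2 ρ' E11 E12).re = 0 := by
    have hc : (!![1,0;0,-1] : Matrix (Fin 2) (Fin 2) ℂ) * (Mr 1 1 0 0)
        * (!![1,0;0,-1] : Matrix (Fin 2) (Fin 2) ℂ)ᴴ = Mr 1 (-1) 0 0 := by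
      ext i j
      fin_cases i <;> fin_cases j <;>
        simp [Mr, Matrix.mul_apply, Fin.sum_univ_two, Matrix.conjTranspose_apply]
    have h := uniEq _ hV1 hV2 (Mr 1 1 0 0)
    rw [hc, re_expand (K 2 ρ') k1 k2 k3 k4 1 (-1) 0 0,
      re_expand (K 2 ρ') k1 k2 k3 k4 1 1 0 0, creRe E11 E12] at h
    linarith
  have hcross2 : (K 2 ρ' E11 E21).re = 0 := by
    have hc : (!![1,0;0,-1] : Matrix (Fin 2) (Fin 2) ℂ) * (Mr 1 0 1 0)
        * (!![1,0;0,-1] : Matrix (Fin 2) (Fin 2) ℂ)ᴴ = Mr 1 0 (-1) 0 := by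
      ext i j
      fin_cases i <;> fin_cases j <;>
        simp [Mr, Matrix.mul_apply, Fin.sum_univ_two, Matrix.conjTranspose_apply]
    have h := uniEq _ hV1 hV2 (Mr 1 0 1 0)
    rw [hc, re_expand (K 2 ρ') k1 k2 k3 k4 1 0 (-1) 0,
      re_expand (K 2 ρ') k1 k2 k3 k4 1 0 1 0, creRe E11 E21] at h
    linarith
  have hcross3 : (K 2 ρ' E12 E22).re = 0 := by
    have hc : (!![1,0;0,-1] : Matrix (Fin 2) (Fin 2) ℂ) * (Mr 0 1 0 1)
        * (!![1,0;0,-1] : Matrix (Fin 2) (Fin 2) ℂ)ᴴ = Mr 0 (-1) 0 1 := by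
      ext i j
      fin_cases i <;> fin_cases j <;>
        simp [Mr, Matrix.mul_apply, Fin.sum_univ_two, Matrix.conjTranspose_apply]
    have h := uniEq _ hV1 hV2 (Mr 0 1 0 1)
    rw [hc, re_expand (K 2 ρ') k1 k2 k3 k4 0 (-1) 0 1,
      re_expand (K 2 ρ') k1 k2 k3 k4 0 1 0 1, creRe E12 E22] at h
    linarith
  have hcross4 : (K 2 ρ' E21 E22).re = 0 := by
    have hc : (!![1,0;0,-1] : Matrix (Fin 2) (Fin 2) ℂ) * (Mr 0 0 1 1)
        * (!![1,0;0,-1] : Matrix (Fin 2) (Fin 2) ℂ)ᴴ = Mr 0 0 (-1) 1 := by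
      ext i j
      fin_cases i <;> fin_cases j <;>
        simp [Mr, Matrix.mul_apply, Fin.sum_univ_two, Matrix.conjTranspose_apply]
    have h := uniEq _ hV1 hV2 (Mr 0 0 1 1)
    rw [hc, re_expand (K 2 ρ') k1 k2 k3 k4 0 0 (-1) 1,
      re_expand (K 2 ρ') k1 k2 k3 k4 0 0 1 1, creRe E21 E22] at h
    linarith
  -- ### Step 5: i-phase symmetry kills the E12/E21 cross term
  have hVi1 : (!![1,0;0,Complex.I] : Matrix (Fin 2) (Fin 2) ℂ)ᴴ * !![1,0;0,Complex.I] = 1 := by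
    ext i j
    fin_cases i <;> fin_cases j <;>
      · simp only [Mr, Matrix.mul_apply, Fin.sum_univ_two, Matrix.conjTranspose_apply,
          Matrix.cons_val', Matrix.cons_val_zero, Matrix.cons_val_one, Matrix.head_cons,
          Matrix.head_fin_const, Matrix.empty_val', Matrix.cons_val_fin_one, Matrix.of_apply,
          Matrix.one_apply]
        push_cast
        norm_num [Complex.ext_iff]
  have hVi2 : (!![1,0;0,Complex.I] : Matrix (Fin 2) (Fin 2) ℂ)
      * (!![1,0;0,Complex.I] : Matrix (Fin 2) (Fin 2) ℂ)ᴴ = 1 := by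
    ext i j
    fin_cases i <;> fin_cases j <;>
      · simp only [Mr, Matrix.mul_apply, Fin.sum_univ_two, Matrix.conjTranspose_apply,
          Matrix.cons_val', Matrix.cons_val_zero, Matrix.cons_val_one, Matrix.head_cons,
          Matrix.head_fin_const, Matrix.empty_val', Matrix.cons_val_fin_one, Matrix.of_apply,
          Matrix.one_apply]
        push_cast
        norm_num [Complex.ext_iff]
  have hs : (K 2 ρ' E12 E21).re = 0 := by
    have hc : (!![1,0;0,Complex.I] : Matrix (Fin 2) (Fin 2) ℂ) * (Mr 0 1 1 0)
        * (!![1,0;0,Complex.I] : Matrix (Fin 2) (Fin 2) ℂ)ᴴ = !![0,-Complex.I;Complex.I,0] := by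
      ext i j
      fin_cases i <;> fin_cases j <;>
        · simp only [Mr, Matrix.mul_apply, Fin.sum_univ_two, Matrix.conjTranspose_apply,
            Matrix.cons_val', Matrix.cons_val_zero, Matrix.cons_val_one, Matrix.head_cons,
            Matrix.head_fin_const, Matrix.empty_val', Matrix.cons_val_fin_one, Matrix.of_apply,
            Matrix.one_apply]
          push_cast
          norm_num [Complex.ext_iff]
    have h := uniEq _ hVi1 hVi2 (Mr 0 1 1 0)
    rw [hc, re_expand_I (K 2 ρ') k1 k2 k3 k4,
      re_expand (K 2 ρ') k1 k2 k3 k4 0 1 1 0, creRe E12 E21] at h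
    linarith
  -- ### Step 6: rotation by the 3-4-5 rotation matrix
  have hR1 : (!![3/5,-(4/5);4/5,3/5] : Matrix (Fin 2) (Fin 2) ℂ)ᴴ * !![3/5,-(4/5);4/5,3/5] = 1 := by
    ext i j
    fin_cases i <;> fin_cases j <;>
      simp [Matrix.mul_apply, Fin.sum_univ_two, Matrix.conjTranspose_apply, Matrix.one_apply,
        map_div₀, map_neg, map_ofNat] <;> ring_nf
  have hR2 : (!![3/5,-(4/5);4/5,3/5] : Matrix (Fin 2) (Fin 2) ℂ)
      * (!![3/5,-(4/5);4/5,3/5] : Matrix (Fin 2) (Fin 2) ℂ)ᴴ = 1 := by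
    ext i j
    fin_cases i <;> fin_cases j <;>
      simp [Matrix.mul_apply, Fin.sum_univ_two, Matrix.conjTranspose_apply, Matrix.one_apply,
        map_div₀, map_neg, map_ofNat] <;> ring_nf
  have hRD : (!![3/5,-(4/5);4/5,3/5] : Matrix (Fin 2) (Fin 2) ℂ) * (Mr 1 0 0 (-1))
      * (!![3/5,-(4/5);4/5,3/5] : Matrix (Fin 2) (Fin 2) ℂ)ᴴ
      = Mr (-7/25) (24/25) (24/25) (7/25) := by
    ext i j
    fin_cases i <;> fin_cases j <;>
      · simp only [Mr, Matrix.mul_apply, Fin.sum_univ_two, Matrix.conjTranspose_apply,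
          Matrix.cons_val', Matrix.cons_val_zero, Matrix.cons_val_one, Matrix.head_cons,
          Matrix.head_fin_const, Matrix.empty_val', Matrix.cons_val_fin_one, Matrix.of_apply]
        push_cast
        norm_num [Complex.ext_iff]
  have hrot := uniEq _ hR1 hR2 (Mr 1 0 0 (-1))
  rw [hRD, re_expand (K 2 ρ') k1 k2 k3 k4 (-7/25) (24/25) (24/25) (7/25),
    re_expand (K 2 ρ') k1 k2 k3 k4 1 0 0 (-1), creRe E11 E12, creRe E11 E21,
    creRe E11 E22, creRe E12 E21, creRe E12 E22, creRe E21 E22] at hrot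
  -- ### Conclusion
  have hab : (K 2 ρ' E11 E11).re = (K 2 ρ' E12 E12).re := by
    nlinarith [hrot, ha2, hb2, hr, hs, hcross1, hcross2, hcross3, hcross4]
  have goal2 : K n ρ En En = K 2 ρ' E12 E12 :=
    Complex.ext (by rw [hFa, hab]) (by rw [im0n En, im0 E12])
  exact goal2
end

section
/- Let (K^(n))_{n≥1} be a family of CPTNI monotone metrics. For i = 1, 2 let ρ_i be a positive definite complex n_i×n_i matrix and X_i, Y_i complex n_i×n_i matrices, with Tr ρ₁ + Tr ρ₂ ≤ 1. Then K^(n₁+n₂)_{ρ₁⊕ρ₂}(X₁⊕X₂, Y₁⊕Y₂) = K^(n₁)_{ρ₁}(X₁, Y₁) + K^(n₂)_{ρ₂}(X₂, Y₂), where ⊕ denotes the block-diagonal direct sum of matrices. -/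
open Matrix ComplexOrder

/-- Block-diagonal direct sum of square matrices, reindexed to `Fin (n₁ + n₂)`. -/
def dsum {n₁ n₂ : ℕ} (A : Matrix (Fin n₁) (Fin n₁) ℂ) (B : Matrix (Fin n₂) (Fin n₂) ℂ) :
    Matrix (Fin (n₁ + n₂)) (Fin (n₁ + n₂)) ℂ :=
  Matrix.reindex finSumFinEquiv finSumFinEquiv (Matrix.fromBlocks A 0 0 B)

/-! ### Auxiliary lemmas about `dsum` -/

section DsumLemmas

variable {n₁ n₂ : ℕ}

lemma dsum_apply (A : Matrix (Fin n₁) (Fin n₁) ℂ) (B : Matrix (Fin n₂) (Fin n₂) ℂ)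
    (i j : Fin (n₁ + n₂)) :
    dsum A B i j = Matrix.fromBlocks A 0 0 B (finSumFinEquiv.symm i) (finSumFinEquiv.symm j) := rfl

lemma dsum_add (A C : Matrix (Fin n₁) (Fin n₁) ℂ) (B D : Matrix (Fin n₂) (Fin n₂) ℂ) :
    dsum (A + C) (B + D) = dsum A B + dsum C D := by
  ext i j
  simp only [dsum_apply, Matrix.add_apply]
  cases h : finSumFinEquiv.symm i <;> cases h' : finSumFinEquiv.symm j <;> simp

lemma dsum_smul (A : Matrix (Fin n₁) (Fin n₁) ℂ) (B : Matrix (Fin n₂) (Fin n₂) ℂ) (c : ℂ) :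
    dsum (c • A) (c • B) = c • dsum A B := by
  ext i j
  simp only [dsum_apply, Matrix.smul_apply]
  cases h : finSumFinEquiv.symm i <;> cases h' : finSumFinEquiv.symm j <;> simp

lemma dsum_mul (A C : Matrix (Fin n₁) (Fin n₁) ℂ) (B D : Matrix (Fin n₂) (Fin n₂) ℂ) :
    dsum A B * dsum C D = dsum (A * C) (B * D) := by
  simp only [dsum, Matrix.reindex_apply]
  rw [Matrix.submatrix_mul_equiv _ _ _ finSumFinEquiv.symm _, Matrix.fromBlocks_multiply]
  simp

lemma dsum_conjTranspose (A : Matrix (Fin n₁) (Fin n₁) ℂ) (B : Matrix (Fin n₂) (Fin n₂) ℂ) :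
    (dsum A B)ᴴ = dsum Aᴴ Bᴴ := by
  simp [dsum, Matrix.fromBlocks_conjTranspose]

lemma trace_dsum (A : Matrix (Fin n₁) (Fin n₁) ℂ) (B : Matrix (Fin n₂) (Fin n₂) ℂ) :
    (dsum A B).trace = A.trace + B.trace := by
  simp only [dsum, Matrix.reindex_apply, Matrix.trace, Matrix.diag, Matrix.submatrix_apply]
  rw [Fintype.sum_equiv finSumFinEquiv.symm _ (fun s => Matrix.fromBlocks A 0 0 B s s)
    (fun x => rfl), Fintype.sum_sum_type]
  simp

lemma dsum_one : dsum (1 : Matrix (Fin n₁) (Fin n₁) ℂ) (1 : Matrix (Fin n₂) (Fin n₂) ℂ) = 1 := by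
  rw [dsum, Matrix.fromBlocks_one]
  simp

lemma dsum_zero : dsum (0 : Matrix (Fin n₁) (Fin n₁) ℂ) (0 : Matrix (Fin n₂) (Fin n₂) ℂ) = 0 := by
  rw [dsum, Matrix.fromBlocks_zero]
  simp

lemma one_sub_dsum_one_zero :
    (1 : Matrix (Fin (n₁ + n₂)) (Fin (n₁ + n₂)) ℂ) - dsum 1 0 = dsum 0 1 := by
  rw [← dsum_one (n₁ := n₁) (n₂ := n₂)]
  rw [sub_eq_iff_eq_add, ← dsum_add]
  simp

lemma fromBlocks_isHermitian {A : Matrix (Fin n₁) (Fin n₁) ℂ} {B : Matrix (Fin n₂) (Fin n₂) ℂ}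
    (hA : A.IsHermitian) (hB : B.IsHermitian) :
    (Matrix.fromBlocks A 0 0 B).IsHermitian := by
  unfold Matrix.IsHermitian
  rw [Matrix.fromBlocks_conjTranspose]
  simp [hA.eq, hB.eq]

lemma fromBlocks_posSemidef {A : Matrix (Fin n₁) (Fin n₁) ℂ} {B : Matrix (Fin n₂) (Fin n₂) ℂ}
    (hA : A.PosSemidef) (hB : B.PosSemidef) :
    (Matrix.fromBlocks A 0 0 B).PosSemidef := by
  refine Matrix.PosSemidef.of_dotProduct_mulVec_nonneg (fromBlocks_isHermitian hA.1 hB.1) fun x => ?_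
  rw [← Sum.elim_comp_inl_inr x]
  simp only [Matrix.fromBlocks_mulVec, Function.star_sumElim, sumElim_dotProduct_sumElim,
    Matrix.zero_mulVec, add_zero, zero_add]
  exact add_nonneg (hA.dotProduct_mulVec_nonneg _) (hB.dotProduct_mulVec_nonneg _)

lemma fromBlocks_posDef {A : Matrix (Fin n₁) (Fin n₁) ℂ} {B : Matrix (Fin n₂) (Fin n₂) ℂ}
    (hA : A.PosDef) (hB : B.PosDef) :
    (Matrix.fromBlocks A 0 0 B).PosDef := by
  refine Matrix.PosDef.of_dotProduct_mulVec_pos (fromBlocks_isHermitian hA.1 hB.1) fun x hx => ?_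
  rw [← Sum.elim_comp_inl_inr x]
  simp only [Matrix.fromBlocks_mulVec, Function.star_sumElim, sumElim_dotProduct_sumElim,
    Matrix.zero_mulVec, add_zero, zero_add]
  have hor : x ∘ Sum.inl ≠ 0 ∨ x ∘ Sum.inr ≠ 0 := by
    by_contra hcon
    push_neg at hcon
    apply hx
    funext i
    cases i with
    | inl i => exact congrFun hcon.1 i
    | inr i => exact congrFun hcon.2 i
  cases hor with
  | inl h => exact add_pos_of_pos_of_nonneg (hA.dotProduct_mulVec_pos h) (hB.posSemidef.dotProduct_mulVec_nonneg _)
  | inr h => exact add_pos_of_nonneg_of_pos (hA.posSemidef.dotProduct_mulVec_nonneg _) (hB.dotProduct_mulVec_pos h)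

lemma posDef_submatrix_equiv {m n : Type*} [Fintype m] [Fintype n]
    {M : Matrix n n ℂ} (hM : M.PosDef) (e : m ≃ n) : (M.submatrix ⇑e ⇑e).PosDef := by
  refine Matrix.PosDef.of_dotProduct_mulVec_pos (hM.1.submatrix _) fun x hx => ?_
  have key : star x ⬝ᵥ ((M.submatrix ⇑e ⇑e) *ᵥ x) = star (x ∘ ⇑e.symm) ⬝ᵥ (M *ᵥ (x ∘ ⇑e.symm)) := by
    rw [Matrix.submatrix_mulVec_equiv]
    simp only [dotProduct, Pi.star_apply, Function.comp_apply]
    exact Fintype.sum_equiv e _ _ (fun i => by simp)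
  rw [key]
  apply hM.dotProduct_mulVec_pos
  intro h0
  apply hx
  funext i
  have := congrFun h0 (e i)
  simpa using this

lemma dsum_posSemidef {A : Matrix (Fin n₁) (Fin n₁) ℂ} {B : Matrix (Fin n₂) (Fin n₂) ℂ}
    (hA : A.PosSemidef) (hB : B.PosSemidef) : (dsum A B).PosSemidef := by
  rw [dsum, Matrix.reindex_apply]
  exact (fromBlocks_posSemidef hA hB).submatrix _

lemma dsum_posDef {A : Matrix (Fin n₁) (Fin n₁) ℂ} {B : Matrix (Fin n₂) (Fin n₂) ℂ}
    (hA : A.PosDef) (hB : B.PosDef) : (dsum A B).PosDef := by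
  rw [dsum, Matrix.reindex_apply]
  exact posDef_submatrix_equiv (fromBlocks_posDef hA hB) finSumFinEquiv.symm

lemma posSemidef_trace_re_nonneg {n : ℕ} {M : Matrix (Fin n) (Fin n) ℂ} (hM : M.PosSemidef) :
    0 ≤ M.trace.re := by
  rw [Matrix.trace, Complex.re_sum]
  apply Finset.sum_nonneg
  intro i _
  have h := hM.dotProduct_mulVec_nonneg (Pi.single i 1)
  have heq : (star (Pi.single i 1) ⬝ᵥ (M *ᵥ Pi.single i 1) : ℂ) = M i i := by
    simp [dotProduct, Matrix.mulVec, Pi.single_apply, Finset.mul_sum]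
  rw [heq] at h
  exact (Complex.le_def.mp h).1

end DsumLemmas

/-! ### Embedding / compression Kraus operators -/

section Kraus

/-- `S`-world column selector for the first block. -/
noncomputable def sw1 (n₁ n₂ : ℕ) : Matrix (Fin n₁ ⊕ Fin n₂) (Fin n₁) ℂ :=
  (1 : Matrix (Fin n₁ ⊕ Fin n₂) (Fin n₁ ⊕ Fin n₂) ℂ).submatrix id Sum.inl

/-- `S`-world column selector for the second block. -/
noncomputable def sw2 (n₁ n₂ : ℕ) : Matrix (Fin n₁ ⊕ Fin n₂) (Fin n₂) ℂ :=
  (1 : Matrix (Fin n₁ ⊕ Fin n₂) (Fin n₁ ⊕ Fin n₂) ℂ).submatrix id Sum.inr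

noncomputable def emb1 (n₁ n₂ : ℕ) : Matrix (Fin (n₁ + n₂)) (Fin n₁) ℂ :=
  (sw1 n₁ n₂).submatrix ⇑finSumFinEquiv.symm id

noncomputable def emb2 (n₁ n₂ : ℕ) : Matrix (Fin (n₁ + n₂)) (Fin n₂) ℂ :=
  (sw2 n₁ n₂).submatrix ⇑finSumFinEquiv.symm id

variable {n₁ n₂ : ℕ}

lemma sw1_conjT_mul_mul (M : Matrix (Fin n₁ ⊕ Fin n₂) (Fin n₁ ⊕ Fin n₂) ℂ) :
    (sw1 n₁ n₂)ᴴ * M * sw1 n₁ n₂ = M.submatrix Sum.inl Sum.inl := by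
  ext a b
  simp [sw1, Matrix.mul_apply, Matrix.one_apply, Fintype.sum_sum_type]

lemma sw2_conjT_mul_mul (M : Matrix (Fin n₁ ⊕ Fin n₂) (Fin n₁ ⊕ Fin n₂) ℂ) :
    (sw2 n₁ n₂)ᴴ * M * sw2 n₁ n₂ = M.submatrix Sum.inr Sum.inr := by
  ext a b
  simp [sw2, Matrix.mul_apply, Matrix.one_apply, Fintype.sum_sum_type]

lemma sw1_conjT_mul_sw1 : (sw1 n₁ n₂)ᴴ * sw1 n₁ n₂ = 1 := by
  ext a b
  simp [sw1, Matrix.mul_apply, Matrix.one_apply, Fintype.sum_sum_type]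

lemma sw2_conjT_mul_sw2 : (sw2 n₁ n₂)ᴴ * sw2 n₁ n₂ = 1 := by
  ext a b
  simp [sw2, Matrix.mul_apply, Matrix.one_apply, Fintype.sum_sum_type]

lemma sw1_mul_mul (X : Matrix (Fin n₁) (Fin n₁) ℂ) :
    sw1 n₁ n₂ * X * (sw1 n₁ n₂)ᴴ = Matrix.fromBlocks X 0 0 0 := by
  ext a b
  cases a <;> cases b <;> simp [sw1, Matrix.mul_apply, Matrix.one_apply]

lemma sw2_mul_mul (Y : Matrix (Fin n₂) (Fin n₂) ℂ) :
    sw2 n₁ n₂ * Y * (sw2 n₁ n₂)ᴴ = Matrix.fromBlocks 0 0 0 Y := by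
  ext a b
  cases a <;> cases b <;> simp [sw2, Matrix.mul_apply, Matrix.one_apply]

lemma emb1_conjT : (emb1 n₁ n₂)ᴴ = ((sw1 n₁ n₂)ᴴ).submatrix id ⇑finSumFinEquiv.symm := by
  simp [emb1]

lemma emb2_conjT : (emb2 n₁ n₂)ᴴ = ((sw2 n₁ n₂)ᴴ).submatrix id ⇑finSumFinEquiv.symm := by
  simp [emb2]

lemma emb1_compress (X : Matrix (Fin n₁) (Fin n₁) ℂ) (Y : Matrix (Fin n₂) (Fin n₂) ℂ) :
    (emb1 n₁ n₂)ᴴ * dsum X Y * emb1 n₁ n₂ = X := by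
  rw [dsum, Matrix.reindex_apply, emb1_conjT, emb1,
    Matrix.submatrix_mul_equiv _ _ _ finSumFinEquiv.symm,
    Matrix.submatrix_mul_equiv _ _ _ finSumFinEquiv.symm, Matrix.submatrix_id_id,
    sw1_conjT_mul_mul]
  ext a b
  simp

lemma emb2_compress (X : Matrix (Fin n₁) (Fin n₁) ℂ) (Y : Matrix (Fin n₂) (Fin n₂) ℂ) :
    (emb2 n₁ n₂)ᴴ * dsum X Y * emb2 n₁ n₂ = Y := by
  rw [dsum, Matrix.reindex_apply, emb2_conjT, emb2,
    Matrix.submatrix_mul_equiv _ _ _ finSumFinEquiv.symm,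
    Matrix.submatrix_mul_equiv _ _ _ finSumFinEquiv.symm, Matrix.submatrix_id_id,
    sw2_conjT_mul_mul]
  ext a b
  simp

lemma emb1_conjT_mul_emb1 : (emb1 n₁ n₂)ᴴ * emb1 n₁ n₂ = 1 := by
  rw [emb1_conjT, emb1, Matrix.submatrix_mul_equiv _ _ _ finSumFinEquiv.symm,
    Matrix.submatrix_id_id, sw1_conjT_mul_sw1]

lemma emb2_conjT_mul_emb2 : (emb2 n₁ n₂)ᴴ * emb2 n₁ n₂ = 1 := by
  rw [emb2_conjT, emb2, Matrix.submatrix_mul_equiv _ _ _ finSumFinEquiv.symm,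
    Matrix.submatrix_id_id, sw2_conjT_mul_sw2]

lemma emb1_mul_mul (X : Matrix (Fin n₁) (Fin n₁) ℂ) :
    emb1 n₁ n₂ * X * (emb1 n₁ n₂)ᴴ = dsum X 0 := by
  have h2 : emb1 n₁ n₂ = (sw1 n₁ n₂).submatrix ⇑finSumFinEquiv.symm ⇑(Equiv.refl (Fin n₁)) := by
    simp [emb1]
  have h3 : X = X.submatrix ⇑(Equiv.refl (Fin n₁)) ⇑(Equiv.refl (Fin n₁)) := by simp
  have h4 : ((sw1 n₁ n₂)ᴴ).submatrix id ⇑finSumFinEquiv.symm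
      = ((sw1 n₁ n₂)ᴴ).submatrix ⇑(Equiv.refl (Fin n₁)) ⇑finSumFinEquiv.symm := by simp
  rw [emb1_conjT, h2, h4]
  conv_lhs => rw [h3]
  rw [Matrix.submatrix_mul_equiv _ _ _ (Equiv.refl (Fin n₁)),
    Matrix.submatrix_mul_equiv _ _ _ (Equiv.refl (Fin n₁)), sw1_mul_mul]
  rfl

lemma emb2_mul_mul (Y : Matrix (Fin n₂) (Fin n₂) ℂ) :
    emb2 n₁ n₂ * Y * (emb2 n₁ n₂)ᴴ = dsum 0 Y := by
  have h2 : emb2 n₁ n₂ = (sw2 n₁ n₂).submatrix ⇑finSumFinEquiv.symm ⇑(Equiv.refl (Fin n₂)) := by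
    simp [emb2]
  have h3 : Y = Y.submatrix ⇑(Equiv.refl (Fin n₂)) ⇑(Equiv.refl (Fin n₂)) := by simp
  have h4 : ((sw2 n₁ n₂)ᴴ).submatrix id ⇑finSumFinEquiv.symm
      = ((sw2 n₁ n₂)ᴴ).submatrix ⇑(Equiv.refl (Fin n₂)) ⇑finSumFinEquiv.symm := by simp
  rw [emb2_conjT, h2, h4]
  conv_lhs => rw [h3]
  rw [Matrix.submatrix_mul_equiv _ _ _ (Equiv.refl (Fin n₂)),
    Matrix.submatrix_mul_equiv _ _ _ (Equiv.refl (Fin n₂)), sw2_mul_mul]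
  rfl

lemma emb1_mul_emb1_conjT : emb1 n₁ n₂ * (emb1 n₁ n₂)ᴴ = dsum 1 0 := by
  have := emb1_mul_mul (n₁ := n₁) (n₂ := n₂) 1
  rwa [Matrix.mul_one] at this

lemma emb2_mul_emb2_conjT : emb2 n₁ n₂ * (emb2 n₁ n₂)ᴴ = dsum 0 1 := by
  have := emb2_mul_mul (n₁ := n₁) (n₂ := n₂) 1
  rwa [Matrix.mul_one] at this

/-! ### The four CPTNI maps -/

/-- Embedding of the first block. -/
noncomputable def embMap1 (n₁ n₂ : ℕ) :
    Matrix (Fin n₁) (Fin n₁) ℂ → Matrix (Fin (n₁ + n₂)) (Fin (n₁ + n₂)) ℂ :=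
  fun Z => emb1 n₁ n₂ * Z * (emb1 n₁ n₂)ᴴ

noncomputable def embMap2 (n₁ n₂ : ℕ) :
    Matrix (Fin n₂) (Fin n₂) ℂ → Matrix (Fin (n₁ + n₂)) (Fin (n₁ + n₂)) ℂ :=
  fun Z => emb2 n₁ n₂ * Z * (emb2 n₁ n₂)ᴴ

/-- Compression onto the first block. -/
noncomputable def comMap1 (n₁ n₂ : ℕ) :
    Matrix (Fin (n₁ + n₂)) (Fin (n₁ + n₂)) ℂ → Matrix (Fin n₁) (Fin n₁) ℂ :=
  fun Z => (emb1 n₁ n₂)ᴴ * Z * ((emb1 n₁ n₂)ᴴ)ᴴ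

noncomputable def comMap2 (n₁ n₂ : ℕ) :
    Matrix (Fin (n₁ + n₂)) (Fin (n₁ + n₂)) ℂ → Matrix (Fin n₂) (Fin n₂) ℂ :=
  fun Z => (emb2 n₁ n₂)ᴴ * Z * ((emb2 n₁ n₂)ᴴ)ᴴ

/-- Projection onto the first block (as a map of the big algebra). -/
noncomputable def projMap (n₁ n₂ : ℕ) :
    Matrix (Fin (n₁ + n₂)) (Fin (n₁ + n₂)) ℂ → Matrix (Fin (n₁ + n₂)) (Fin (n₁ + n₂)) ℂ :=
  fun Z => dsum 1 0 * Z * (dsum (1 : Matrix (Fin n₁) (Fin n₁) ℂ)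
    (0 : Matrix (Fin n₂) (Fin n₂) ℂ))ᴴ

lemma embMap1_apply (Z : Matrix (Fin n₁) (Fin n₁) ℂ) : embMap1 n₁ n₂ Z = dsum Z 0 :=
  emb1_mul_mul Z

lemma embMap2_apply (Z : Matrix (Fin n₂) (Fin n₂) ℂ) : embMap2 n₁ n₂ Z = dsum 0 Z :=
  emb2_mul_mul Z

lemma comMap1_apply (X : Matrix (Fin n₁) (Fin n₁) ℂ) (Y : Matrix (Fin n₂) (Fin n₂) ℂ) :
    comMap1 n₁ n₂ (dsum X Y) = X := by
  unfold comMap1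
  rw [conjTranspose_conjTranspose]
  exact emb1_compress X Y

lemma comMap2_apply (X : Matrix (Fin n₁) (Fin n₁) ℂ) (Y : Matrix (Fin n₂) (Fin n₂) ℂ) :
    comMap2 n₁ n₂ (dsum X Y) = Y := by
  unfold comMap2
  rw [conjTranspose_conjTranspose]
  exact emb2_compress X Y

lemma dsum_one_zero_conjT :
    (dsum (1 : Matrix (Fin n₁) (Fin n₁) ℂ) (0 : Matrix (Fin n₂) (Fin n₂) ℂ))ᴴ = dsum 1 0 := by
  rw [dsum_conjTranspose]
  simp

lemma projMap_apply (X : Matrix (Fin n₁) (Fin n₁) ℂ) (Y : Matrix (Fin n₂) (Fin n₂) ℂ) :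
    projMap n₁ n₂ (dsum X Y) = dsum X 0 := by
  unfold projMap
  rw [dsum_one_zero_conjT, dsum_mul, dsum_mul]
  simp

lemma embMap1_cptni : IsCPTNI (embMap1 n₁ n₂) := by
  refine ⟨1, fun _ => emb1 n₁ n₂, fun X => by simp [embMap1], ?_⟩
  simp only [Fin.sum_univ_one, emb1_conjT_mul_emb1, sub_self]
  exact Matrix.PosSemidef.zero

lemma embMap2_cptni : IsCPTNI (embMap2 n₁ n₂) := by
  refine ⟨1, fun _ => emb2 n₁ n₂, fun X => by simp [embMap2], ?_⟩
  simp only [Fin.sum_univ_one, emb2_conjT_mul_emb2, sub_self]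
  exact Matrix.PosSemidef.zero

lemma comMap1_cptni : IsCPTNI (comMap1 n₁ n₂) := by
  refine ⟨1, fun _ => (emb1 n₁ n₂)ᴴ, fun X => by simp [comMap1], ?_⟩
  simp only [Fin.sum_univ_one, conjTranspose_conjTranspose, emb1_mul_emb1_conjT,
    one_sub_dsum_one_zero]
  exact dsum_posSemidef Matrix.PosSemidef.zero Matrix.PosSemidef.one

lemma comMap2_cptni : IsCPTNI (comMap2 n₁ n₂) := by
  refine ⟨1, fun _ => (emb2 n₁ n₂)ᴴ, fun X => by simp [comMap2], ?_⟩
  have h : (1 : Matrix (Fin (n₁ + n₂)) (Fin (n₁ + n₂)) ℂ) - dsum 0 1 = dsum 1 0 := by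
    rw [← dsum_one (n₁ := n₁) (n₂ := n₂), sub_eq_iff_eq_add, ← dsum_add]
    simp
  simp only [Fin.sum_univ_one, conjTranspose_conjTranspose, emb2_mul_emb2_conjT, h]
  exact dsum_posSemidef Matrix.PosSemidef.one Matrix.PosSemidef.zero

lemma projMap_cptni : IsCPTNI (projMap n₁ n₂) := by
  refine ⟨1, fun _ => dsum 1 0, fun X => by simp [projMap], ?_⟩
  simp only [Fin.sum_univ_one, dsum_one_zero_conjT, dsum_mul, one_mul, mul_one, mul_zero,
    zero_mul, one_sub_dsum_one_zero]
  exact dsum_posSemidef Matrix.PosSemidef.zero Matrix.PosSemidef.one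

end Kraus

/-! ### Scalar helper lemmas -/

lemma quad_coeff_zero {q r : ℝ} (hq : 0 ≤ q) (h : ∀ t : ℝ, 0 ≤ t ^ 2 * q + 2 * t * r) :
    r = 0 := by
  have hq1 : (0:ℝ) < q + 1 := by linarith
  set t := -(r / (q + 1)) with ht
  have hr : r = -(q + 1) * t := by
    rw [ht]
    field_simp
  have h1 := h t
  rw [hr] at h1
  have ht2 : t ^ 2 * (q + 2) ≤ 0 := by nlinarith
  have : t = 0 := by nlinarith [sq_nonneg t]
  rw [hr, this, mul_zero]

lemma complex_eq_of_pol {κ κ' : ℂ}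
    (h1 : κ + (starRingEnd ℂ) κ = κ' + (starRingEnd ℂ) κ')
    (h2 : Complex.I * κ + (starRingEnd ℂ) (Complex.I * κ)
      = Complex.I * κ' + (starRingEnd ℂ) (Complex.I * κ')) : κ = κ' := by
  have hre := congrArg Complex.re h1
  have him := congrArg Complex.re h2
  simp only [Complex.add_re, Complex.conj_re, Complex.mul_re, Complex.I_re, Complex.I_im,
    zero_mul, one_mul, zero_sub, neg_add_rev] at hre him
  apply Complex.ext <;> linarith

/-- Expansion of the quadratic form of an inner product. -/
lemma ip_expand {n : ℕ} {K : Matrix (Fin n) (Fin n) ℂ → Matrix (Fin n) (Fin n) ℂ → ℂ}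
    (h : IsInnerProduct K) (c : ℂ) (A B : Matrix (Fin n) (Fin n) ℂ) :
    K (A + c • B) (A + c • B) =
      K A A + (c * K A B + (starRingEnd ℂ) (c * K A B)) + (starRingEnd ℂ) c * c * K B B := by
  obtain ⟨hal, har, hsr, hsl, hh, -⟩ := h
  rw [hal, har, har, hsr, hsl, hsl, hsr, hh A B, _root_.map_mul (starRingEnd ℂ) c (K A B)]
  ring

lemma ip_expand_add {n : ℕ} {K : Matrix (Fin n) (Fin n) ℂ → Matrix (Fin n) (Fin n) ℂ → ℂ}
    (h : IsInnerProduct K) (A B : Matrix (Fin n) (Fin n) ℂ) :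
    K (A + B) (A + B) = K A A + (K A B + (starRingEnd ℂ) (K A B)) + K B B := by
  obtain ⟨hal, har, -, -, hh, -⟩ := h
  rw [hal, har, har, hh A B]
  ring

lemma ip_zero {n : ℕ} {K : Matrix (Fin n) (Fin n) ℂ → Matrix (Fin n) (Fin n) ℂ → ℂ}
    (h : IsInnerProduct K) (B : Matrix (Fin n) (Fin n) ℂ) : K 0 B = 0 := by
  have := h.1 0 0 B
  simp only [add_zero] at this
  exact (left_eq_add.mp this)

lemma ip_quad_nonneg {n : ℕ} {K : Matrix (Fin n) (Fin n) ℂ → Matrix (Fin n) (Fin n) ℂ → ℂ}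
    (h : IsInnerProduct K) (B : Matrix (Fin n) (Fin n) ℂ) : 0 ≤ (K B B).re := by
  by_cases hB : B = 0
  · subst hB
    rw [ip_zero h 0]
    simp
  · exact le_of_lt (h.2.2.2.2.2 B hB)

lemma ip_quad_im {n : ℕ} {K : Matrix (Fin n) (Fin n) ℂ → Matrix (Fin n) (Fin n) ℂ → ℂ}
    (h : IsInnerProduct K) (B : Matrix (Fin n) (Fin n) ℂ) : (K B B).im = 0 := by
  have := h.2.2.2.2.1 B B
  have h2 := congrArg Complex.im this
  simp only [Complex.conj_im] at h2
  linarith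

/-! ### The main theorem -/

/-- additivity of CPTNI monotone metrics with respect to direct sums. -/
theorem stmt9
    (K : (n : ℕ) → Matrix (Fin n) (Fin n) ℂ →
      Matrix (Fin n) (Fin n) ℂ → Matrix (Fin n) (Fin n) ℂ → ℂ)
    (hK : MonotoneMetricFamily K)
    {n₁ n₂ : ℕ}
    (ρ₁ : Matrix (Fin n₁) (Fin n₁) ℂ) (hρ₁ : ρ₁.PosDef)
    (ρ₂ : Matrix (Fin n₂) (Fin n₂) ℂ) (hρ₂ : ρ₂.PosDef)
    (htr : ρ₁.trace.re + ρ₂.trace.re ≤ 1)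
    (X₁ Y₁ : Matrix (Fin n₁) (Fin n₁) ℂ) (X₂ Y₂ : Matrix (Fin n₂) (Fin n₂) ℂ) :
    K (n₁ + n₂) (dsum ρ₁ ρ₂) (dsum X₁ X₂) (dsum Y₁ Y₂) =
      K n₁ ρ₁ X₁ Y₁ + K n₂ ρ₂ X₂ Y₂ := by
  obtain ⟨hIP, hmono⟩ := hK
  have htr1 : ρ₁.trace.re ≤ 1 := by
    have := posSemidef_trace_re_nonneg hρ₂.posSemidef; linarith
  have htr2 : ρ₂.trace.re ≤ 1 := by
    have := posSemidef_trace_re_nonneg hρ₁.posSemidef; linarith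
  have hρ : (dsum ρ₁ ρ₂).PosDef := dsum_posDef hρ₁ hρ₂
  have htrρ : (dsum ρ₁ ρ₂).trace.re ≤ 1 := by
    rw [trace_dsum, Complex.add_re]; exact htr
  have ipN := hIP (n₁ + n₂) (dsum ρ₁ ρ₂) hρ htrρ
  have ip1 := hIP n₁ ρ₁ hρ₁ htr1
  have ip2 := hIP n₂ ρ₂ hρ₂ htr2
  have hσ2 : (dsum (0 : Matrix (Fin n₁) (Fin n₁) ℂ) ρ₂).PosSemidef :=
    dsum_posSemidef Matrix.PosSemidef.zero hρ₂.posSemidef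
  have hσ1 : (dsum ρ₁ (0 : Matrix (Fin n₂) (Fin n₂) ℂ)).PosSemidef :=
    dsum_posSemidef hρ₁.posSemidef Matrix.PosSemidef.zero
  -- splitting of the state
  have hsplit1 : dsum ρ₁ (0 : Matrix (Fin n₂) (Fin n₂) ℂ) + dsum 0 ρ₂ = dsum ρ₁ ρ₂ := by
    rw [← dsum_add]; simp
  -- Step 1 : embeddings give one inequality
  have hub1 : ∀ X : Matrix (Fin n₁) (Fin n₁) ℂ,
      (K (n₁ + n₂) (dsum ρ₁ ρ₂) (dsum X 0) (dsum X 0)).re ≤ (K n₁ ρ₁ X X).re := by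
    intro X
    have hEq : embMap1 n₁ n₂ ρ₁ + dsum 0 ρ₂ = dsum ρ₁ ρ₂ := by
      rw [embMap1_apply, hsplit1]
    have h := hmono n₁ (n₁ + n₂) (embMap1 n₁ n₂) embMap1_cptni (dsum 0 ρ₂) hσ2 ρ₁ hρ₁ htr1
      (by rw [hEq]; exact hρ) (by rw [hEq]; exact htrρ) X
    rwa [hEq, embMap1_apply] at h
  have hub2 : ∀ Y : Matrix (Fin n₂) (Fin n₂) ℂ,
      (K (n₁ + n₂) (dsum ρ₁ ρ₂) (dsum 0 Y) (dsum 0 Y)).re ≤ (K n₂ ρ₂ Y Y).re := by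
    intro Y
    have hEq : embMap2 n₁ n₂ ρ₂ + dsum ρ₁ 0 = dsum ρ₁ ρ₂ := by
      rw [embMap2_apply, ← dsum_add]; simp
    have h := hmono n₂ (n₁ + n₂) (embMap2 n₁ n₂) embMap2_cptni (dsum ρ₁ 0) hσ1 ρ₂ hρ₂ htr2
      (by rw [hEq]; exact hρ) (by rw [hEq]; exact htrρ) Y
    rwa [hEq, embMap2_apply] at h
  -- Step 2 : compressions give the reverse inequality
  have hlb1 : ∀ X : Matrix (Fin n₁) (Fin n₁) ℂ,
      (K n₁ ρ₁ X X).re ≤ (K (n₁ + n₂) (dsum ρ₁ ρ₂) (dsum X 0) (dsum X 0)).re := by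
    intro X
    have hEq : comMap1 n₁ n₂ (dsum ρ₁ ρ₂) + 0 = ρ₁ := by
      rw [comMap1_apply, add_zero]
    have h := hmono (n₁ + n₂) n₁ (comMap1 n₁ n₂) comMap1_cptni 0 Matrix.PosSemidef.zero
      (dsum ρ₁ ρ₂) hρ htrρ (by rw [hEq]; exact hρ₁) (by rw [hEq]; exact htr1) (dsum X 0)
    rwa [hEq, comMap1_apply] at h
  have hlb2 : ∀ Y : Matrix (Fin n₂) (Fin n₂) ℂ,
      (K n₂ ρ₂ Y Y).re ≤ (K (n₁ + n₂) (dsum ρ₁ ρ₂) (dsum 0 Y) (dsum 0 Y)).re := by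
    intro Y
    have hEq : comMap2 n₁ n₂ (dsum ρ₁ ρ₂) + 0 = ρ₂ := by
      rw [comMap2_apply, add_zero]
    have h := hmono (n₁ + n₂) n₂ (comMap2 n₁ n₂) comMap2_cptni 0 Matrix.PosSemidef.zero
      (dsum ρ₁ ρ₂) hρ htrρ (by rw [hEq]; exact hρ₂) (by rw [hEq]; exact htr2) (dsum 0 Y)
    rwa [hEq, comMap2_apply] at h
  -- full complex quadratic equalities
  have hQ1 : ∀ X : Matrix (Fin n₁) (Fin n₁) ℂ,
      K (n₁ + n₂) (dsum ρ₁ ρ₂) (dsum X 0) (dsum X 0) = K n₁ ρ₁ X X := by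
    intro X
    apply Complex.ext
    · exact le_antisymm (hub1 X) (hlb1 X)
    · rw [ip_quad_im ipN, ip_quad_im ip1]
  have hQ2 : ∀ Y : Matrix (Fin n₂) (Fin n₂) ℂ,
      K (n₁ + n₂) (dsum ρ₁ ρ₂) (dsum 0 Y) (dsum 0 Y) = K n₂ ρ₂ Y Y := by
    intro Y
    apply Complex.ext
    · exact le_antisymm (hub2 Y) (hlb2 Y)
    · rw [ip_quad_im ipN, ip_quad_im ip2]
  -- Step 3 : orthogonality of the two blocks
  have horth : ∀ (X : Matrix (Fin n₁) (Fin n₁) ℂ) (Y : Matrix (Fin n₂) (Fin n₂) ℂ),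
      K (n₁ + n₂) (dsum ρ₁ ρ₂) (dsum X 0) (dsum 0 Y) = 0 := by
    intro X Y
    set A : Matrix (Fin (n₁ + n₂)) (Fin (n₁ + n₂)) ℂ := dsum X 0 with hA
    set B : Matrix (Fin (n₁ + n₂)) (Fin (n₁ + n₂)) ℂ := dsum 0 Y with hB
    have hApcB : ∀ c : ℂ, A + c • B = dsum X (c • Y) := by
      intro c
      rw [hA, hB, ← dsum_smul, ← dsum_add]
      simp
    have hproj : ∀ c : ℂ, projMap n₁ n₂ (A + c • B) = A := by
      intro c
      rw [hApcB, projMap_apply]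
    have hkey : ∀ c : ℂ,
        0 ≤ (c * K (n₁ + n₂) (dsum ρ₁ ρ₂) A B
            + (starRingEnd ℂ) (c * K (n₁ + n₂) (dsum ρ₁ ρ₂) A B)).re
          + ((starRingEnd ℂ) c * c * K (n₁ + n₂) (dsum ρ₁ ρ₂) B B).re := by
      intro c
      have hEq : projMap n₁ n₂ (dsum ρ₁ ρ₂) + dsum 0 ρ₂ = dsum ρ₁ ρ₂ := by
        rw [projMap_apply, hsplit1]
      have h := hmono (n₁ + n₂) (n₁ + n₂) (projMap n₁ n₂) projMap_cptni (dsum 0 ρ₂) hσ2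
        (dsum ρ₁ ρ₂) hρ htrρ (by rw [hEq]; exact hρ) (by rw [hEq]; exact htrρ) (A + c • B)
      rw [hEq, hproj c] at h
      rw [ip_expand ipN c A B] at h
      simp only [Complex.add_re] at h ⊢
      linarith
    set κ := K (n₁ + n₂) (dsum ρ₁ ρ₂) A B with hκ
    have hre : κ.re = 0 := by
      apply quad_coeff_zero (ip_quad_nonneg ipN B)
      intro t
      have h := hkey (t : ℂ)
      simp only [Complex.add_re, Complex.conj_re, Complex.conj_ofReal, Complex.mul_re,
        Complex.mul_im, Complex.ofReal_re, Complex.ofReal_im, zero_mul, mul_zero, sub_zero,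
        zero_add, add_zero] at h
      nlinarith [h]
    have him : κ.im = 0 := by
      have h0 := quad_coeff_zero (ip_quad_nonneg ipN B) (r := -κ.im) ?_
      · linarith
      intro t
      have h := hkey ((t : ℂ) * Complex.I)
      have hc : (starRingEnd ℂ) ((t : ℂ) * Complex.I) * ((t : ℂ) * Complex.I)
          = ((t ^ 2 : ℝ) : ℂ) := by
        rw [_root_.map_mul, Complex.conj_ofReal, Complex.conj_I]
        push_cast
        ring_nf
        rw [Complex.I_sq]
        ring
      rw [hc] at h
      simp only [Complex.add_re, Complex.conj_re, Complex.mul_re, Complex.mul_im,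
        Complex.I_re, Complex.I_im, Complex.ofReal_re, Complex.ofReal_im,
        zero_mul, one_mul, mul_zero, mul_one, zero_sub, sub_zero, zero_add, add_zero] at h
      nlinarith [h]
    apply Complex.ext
    · exact hre
    · exact him
  -- Step 4 : polarization to get the sesquilinear equalities
  have hpol1 : ∀ X Y : Matrix (Fin n₁) (Fin n₁) ℂ,
      K (n₁ + n₂) (dsum ρ₁ ρ₂) (dsum X 0) (dsum Y 0) = K n₁ ρ₁ X Y := by
    intro X Y
    apply complex_eq_of_pol
    · have e1 : dsum (X + Y) (0 : Matrix (Fin n₂) (Fin n₂) ℂ) = dsum X 0 + dsum Y 0 := by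
        rw [← dsum_add]; simp
      have h1 := hQ1 (X + Y)
      rw [e1, ip_expand_add ipN (dsum X 0) (dsum Y 0), ip_expand_add ip1 X Y,
        hQ1 X, hQ1 Y] at h1
      exact add_left_cancel (add_right_cancel h1)
    · have e1 : dsum (X + Complex.I • Y) (0 : Matrix (Fin n₂) (Fin n₂) ℂ)
          = dsum X 0 + Complex.I • dsum Y 0 := by
        rw [← dsum_smul, ← dsum_add]; simp
      have h1 := hQ1 (X + Complex.I • Y)
      rw [e1, ip_expand ipN Complex.I (dsum X 0) (dsum Y 0),
        ip_expand ip1 Complex.I X Y, hQ1 X, hQ1 Y] at h1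
      exact add_left_cancel (add_right_cancel h1)
  have hpol2 : ∀ X Y : Matrix (Fin n₂) (Fin n₂) ℂ,
      K (n₁ + n₂) (dsum ρ₁ ρ₂) (dsum 0 X) (dsum 0 Y) = K n₂ ρ₂ X Y := by
    intro X Y
    apply complex_eq_of_pol
    · have e1 : dsum (0 : Matrix (Fin n₁) (Fin n₁) ℂ) (X + Y) = dsum 0 X + dsum 0 Y := by
        rw [← dsum_add]; simp
      have h1 := hQ2 (X + Y)
      rw [e1, ip_expand_add ipN (dsum 0 X) (dsum 0 Y), ip_expand_add ip2 X Y,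
        hQ2 X, hQ2 Y] at h1
      exact add_left_cancel (add_right_cancel h1)
    · have e1 : dsum (0 : Matrix (Fin n₁) (Fin n₁) ℂ) (X + Complex.I • Y)
          = dsum 0 X + Complex.I • dsum 0 Y := by
        rw [← dsum_smul, ← dsum_add]; simp
      have h1 := hQ2 (X + Complex.I • Y)
      rw [e1, ip_expand ipN Complex.I (dsum 0 X) (dsum 0 Y),
        ip_expand ip2 Complex.I X Y, hQ2 X, hQ2 Y] at h1
      exact add_left_cancel (add_right_cancel h1)
  -- Step 5 : assemble
  have hsplitX : dsum X₁ X₂ = dsum X₁ 0 + dsum 0 X₂ := by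
    rw [← dsum_add]; simp
  have hsplitY : dsum Y₁ Y₂ = dsum Y₁ 0 + dsum 0 Y₂ := by
    rw [← dsum_add]; simp
  obtain ⟨hal, har, hsr, hsl, hh, -⟩ := ipN
  rw [hsplitX, hsplitY, hal, har, har]
  rw [hpol1 X₁ Y₁, hpol2 X₂ Y₂, horth X₁ Y₂]
  have hor2 : K (n₁ + n₂) (dsum ρ₁ ρ₂) (dsum 0 X₂) (dsum Y₁ 0) = 0 := by
    rw [hh (dsum Y₁ 0) (dsum 0 X₂), horth Y₁ X₂, map_zero]
  rw [hor2]
  ring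
end

section
/- Let (K^(n))_{n≥1} be a family of CPTNI monotone metrics, let ρ₁, ρ₂ be positive definite complex n×n matrices with Tr ρ₁ ≤ 1 and Tr ρ₂ ≤ 1, and let X₁, X₂ be complex n×n matrices. Then K^(n)_{(ρ₁+ρ₂)/2}((X₁+X₂)/2, (X₁+X₂)/2) ≤ (1/2)[ K^(n)_{ρ₁}(X₁, X₁) + K^(n)_{ρ₂}(X₂, X₂) ]. -/
open Matrix ComplexOrder

namespace Stmt10Aux

variable {n : ℕ}

/-! ### Block embeddings `Fin n → Fin (n+n)` -/

noncomputable def u1 (n : ℕ) : Matrix (Fin (n+n)) (Fin n) ℂ :=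
  Matrix.of fun i j => if finSumFinEquiv.symm i = Sum.inl j then 1 else 0
noncomputable def u2 (n : ℕ) : Matrix (Fin (n+n)) (Fin n) ℂ :=
  Matrix.of fun i j => if finSumFinEquiv.symm i = Sum.inr j then 1 else 0

lemma u1tu1 : (u1 n)ᴴ * u1 n = 1 := by
  ext a b
  simp only [Matrix.mul_apply, Matrix.conjTranspose_apply, u1, Matrix.of_apply]
  rw [← Equiv.sum_comp (finSumFinEquiv (m := n) (n := n)).symm.symm]
  simp [Fintype.sum_sum_type, apply_ite, Finset.sum_ite_eq, Matrix.one_apply, eq_comm]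

lemma u2tu2 : (u2 n)ᴴ * u2 n = 1 := by
  ext a b
  simp only [Matrix.mul_apply, Matrix.conjTranspose_apply, u2, Matrix.of_apply]
  rw [← Equiv.sum_comp (finSumFinEquiv (m := n) (n := n)).symm.symm]
  simp [Fintype.sum_sum_type, apply_ite, Finset.sum_ite_eq, Matrix.one_apply, eq_comm]

lemma u1tu2 : (u1 n)ᴴ * u2 n = 0 := by
  ext a b
  simp only [Matrix.mul_apply, Matrix.conjTranspose_apply, u1, u2, Matrix.of_apply]
  rw [← Equiv.sum_comp (finSumFinEquiv (m := n) (n := n)).symm.symm]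
  simp [Fintype.sum_sum_type, apply_ite]

lemma u2tu1 : (u2 n)ᴴ * u1 n = 0 := by
  ext a b
  simp only [Matrix.mul_apply, Matrix.conjTranspose_apply, u1, u2, Matrix.of_apply]
  rw [← Equiv.sum_comp (finSumFinEquiv (m := n) (n := n)).symm.symm]
  simp [Fintype.sum_sum_type, apply_ite]

lemma complete : u1 n * (u1 n)ᴴ + u2 n * (u2 n)ᴴ = 1 := by
  ext i k
  simp only [Matrix.add_apply, Matrix.mul_apply, Matrix.conjTranspose_apply, u1, u2,
    Matrix.of_apply, Matrix.one_apply]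
  rcases h : finSumFinEquiv.symm i with a | a <;>
    rcases h' : finSumFinEquiv.symm k with c | c <;>
      simp [h, h', apply_ite, Finset.sum_ite_eq,
        ← Equiv.apply_eq_iff_eq (finSumFinEquiv (m := n) (n := n)).symm, eq_comm]

section lems
variable {m' : Type*}

lemma l11 (X : Matrix (Fin n) m' ℂ) : (u1 n)ᴴ * (u1 n * X) = X := by
  rw [← Matrix.mul_assoc, u1tu1, Matrix.one_mul]
lemma l22 (X : Matrix (Fin n) m' ℂ) : (u2 n)ᴴ * (u2 n * X) = X := by
  rw [← Matrix.mul_assoc, u2tu2, Matrix.one_mul]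
lemma l12 (X : Matrix (Fin n) m' ℂ) : (u1 n)ᴴ * (u2 n * X) = 0 := by
  rw [← Matrix.mul_assoc, u1tu2, Matrix.zero_mul]
lemma l21 (X : Matrix (Fin n) m' ℂ) : (u2 n)ᴴ * (u1 n * X) = 0 := by
  rw [← Matrix.mul_assoc, u2tu1, Matrix.zero_mul]
end lems

/-! ### Block-diagonal `2n × 2n` matrices -/

noncomputable def db (A B : Matrix (Fin n) (Fin n) ℂ) : Matrix (Fin (n+n)) (Fin (n+n)) ℂ :=
  u1 n * A * (u1 n)ᴴ + u2 n * B * (u2 n)ᴴ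

lemma db_mul (A B A' B' : Matrix (Fin n) (Fin n) ℂ) :
    db A B * db A' B' = db (A * A') (B * B') := by
  simp only [db, Matrix.mul_add, Matrix.add_mul, Matrix.mul_assoc, l11, l22, l12, l21,
    Matrix.mul_zero, Matrix.zero_mul, add_zero, zero_add]

lemma db_add (A B A' B' : Matrix (Fin n) (Fin n) ℂ) :
    db A B + db A' B' = db (A + A') (B + B') := by
  simp only [db, Matrix.mul_add, Matrix.add_mul]; abel

lemma db_sub (A B A' B' : Matrix (Fin n) (Fin n) ℂ) :
    db A B - db A' B' = db (A - A') (B - B') := by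
  simp only [db, Matrix.sub_mul, Matrix.mul_sub]; abel

lemma db_smul (c : ℂ) (A B : Matrix (Fin n) (Fin n) ℂ) :
    c • db A B = db (c • A) (c • B) := by
  simp only [db, smul_add, Matrix.smul_mul, Matrix.mul_smul]

lemma db_conjTranspose (A B : Matrix (Fin n) (Fin n) ℂ) :
    (db A B)ᴴ = db Aᴴ Bᴴ := by
  simp only [db, Matrix.conjTranspose_add, Matrix.conjTranspose_mul,
    Matrix.conjTranspose_conjTranspose, Matrix.mul_assoc]

lemma db_one : db (1 : Matrix (Fin n) (Fin n) ℂ) 1 = 1 := by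
  simpa only [db, Matrix.mul_one] using complete

lemma db_zero : db (0 : Matrix (Fin n) (Fin n) ℂ) 0 = 0 := by
  simp [db]

lemma db_trace (A B : Matrix (Fin n) (Fin n) ℂ) :
    (db A B).trace = A.trace + B.trace := by
  simp only [db, Matrix.trace_add, Matrix.mul_assoc]
  rw [Matrix.trace_mul_comm (u1 n), Matrix.trace_mul_comm (u2 n), Matrix.mul_assoc,
    Matrix.mul_assoc, u1tu1, u2tu2, Matrix.mul_one, Matrix.mul_one]

lemma u1_extract (A B : Matrix (Fin n) (Fin n) ℂ) : (u1 n)ᴴ * db A B * u1 n = A := by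
  simp only [db, Matrix.mul_add, Matrix.add_mul, Matrix.mul_assoc, l11, l22, l12, l21,
    Matrix.mul_zero, Matrix.zero_mul, add_zero, zero_add, u1tu1, Matrix.mul_one]

lemma u2_extract (A B : Matrix (Fin n) (Fin n) ℂ) : (u2 n)ᴴ * db A B * u2 n = B := by
  simp only [db, Matrix.mul_add, Matrix.add_mul, Matrix.mul_assoc, l11, l22, l12, l21,
    Matrix.mul_zero, Matrix.zero_mul, add_zero, zero_add, u2tu2, Matrix.mul_one]

/-! ### The swap unitary -/

noncomputable def sw (n : ℕ) : Matrix (Fin (n+n)) (Fin (n+n)) ℂ :=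
  u1 n * (u2 n)ᴴ + u2 n * (u1 n)ᴴ

lemma sw_conjTranspose : (sw n)ᴴ = sw n := by
  simp only [sw, Matrix.conjTranspose_add, Matrix.conjTranspose_mul,
    Matrix.conjTranspose_conjTranspose]
  abel

lemma sw_t_sw : (sw n)ᴴ * sw n = 1 := by
  rw [sw_conjTranspose]
  simp only [sw, Matrix.mul_add, Matrix.add_mul, Matrix.mul_assoc, l11, l22, l12, l21,
    Matrix.mul_zero, add_zero, zero_add]
  simpa only [add_comm] using complete (n := n)

lemma sw_db (A B : Matrix (Fin n) (Fin n) ℂ) : sw n * db A B * (sw n)ᴴ = db B A := by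
  rw [sw_conjTranspose]
  simp only [sw, db, Matrix.mul_add, Matrix.add_mul, Matrix.mul_assoc, l11, l22, l12, l21,
    Matrix.mul_zero, Matrix.zero_mul, add_zero, zero_add]
  abel

/-! ### Positivity -/

lemma db_posSemidef {A B : Matrix (Fin n) (Fin n) ℂ} (hA : A.PosSemidef) (hB : B.PosSemidef) :
    (db A B).PosSemidef :=
  (hA.mul_mul_conjTranspose_same (u1 n)).add (hB.mul_mul_conjTranspose_same (u2 n))

lemma quad_form (u : Matrix (Fin (n+n)) (Fin n) ℂ) (M : Matrix (Fin n) (Fin n) ℂ)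
    (x : Fin (n+n) → ℂ) :
    star x ⬝ᵥ ((u * M * uᴴ) *ᵥ x) = star (uᴴ *ᵥ x) ⬝ᵥ (M *ᵥ (uᴴ *ᵥ x)) := by
  rw [star_mulVec, conjTranspose_conjTranspose, mulVec_mulVec, ← dotProduct_mulVec,
    mulVec_mulVec, ← Matrix.mul_assoc]

lemma db_posDef {A B : Matrix (Fin n) (Fin n) ℂ} (hA : A.PosDef) (hB : B.PosDef) :
    (db A B).PosDef := by
  rw [posDef_iff_dotProduct_mulVec]
  constructor
  · show (db A B)ᴴ = db A B
    rw [db_conjTranspose, hA.isHermitian.eq, hB.isHermitian.eq]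
  · intro x hx
    have hsplit : u1 n *ᵥ ((u1 n)ᴴ *ᵥ x) + u2 n *ᵥ ((u2 n)ᴴ *ᵥ x) = x := by
      rw [mulVec_mulVec, mulVec_mulVec, ← add_mulVec, complete, one_mulVec]
    have key : star x ⬝ᵥ (db A B *ᵥ x)
        = star ((u1 n)ᴴ *ᵥ x) ⬝ᵥ (A *ᵥ ((u1 n)ᴴ *ᵥ x))
          + star ((u2 n)ᴴ *ᵥ x) ⬝ᵥ (B *ᵥ ((u2 n)ᴴ *ᵥ x)) := by
      rw [db, add_mulVec, dotProduct_add, quad_form, quad_form]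
    rw [key]
    by_cases h1 : (u1 n)ᴴ *ᵥ x = 0
    · have h2 : (u2 n)ᴴ *ᵥ x ≠ 0 := by
        intro h2
        apply hx
        rw [← hsplit, h1, h2, mulVec_zero, mulVec_zero, add_zero]
      have hz : star ((u1 n)ᴴ *ᵥ x) ⬝ᵥ (A *ᵥ ((u1 n)ᴴ *ᵥ x)) = 0 := by simp [h1]
      rw [hz, zero_add]
      exact hB.dotProduct_mulVec_pos h2
    · exact add_pos_of_pos_of_nonneg (hA.dotProduct_mulVec_pos h1) (hB.posSemidef.dotProduct_mulVec_nonneg _)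

lemma smul_posDef {A : Matrix (Fin n) (Fin n) ℂ} (hA : A.PosDef)
    {c : ℝ} (hc : 0 < c) : ((c : ℂ) • A).PosDef := by
  rw [posDef_iff_dotProduct_mulVec]
  constructor
  · show ((c:ℂ) • A)ᴴ = (c:ℂ) • A
    rw [conjTranspose_smul, hA.isHermitian.eq, Complex.star_def, Complex.conj_ofReal]
  · intro x hx
    rw [smul_mulVec, dotProduct_smul, smul_eq_mul]
    exact mul_pos (Complex.zero_lt_real.mpr hc) (hA.dotProduct_mulVec_pos hx)

lemma smul_posSemidef {A : Matrix (Fin n) (Fin n) ℂ} (hA : A.PosSemidef)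
    {c : ℝ} (hc : 0 ≤ c) : ((c : ℂ) • A).PosSemidef := by
  rw [posSemidef_iff_dotProduct_mulVec]
  constructor
  · show ((c:ℂ) • A)ᴴ = (c:ℂ) • A
    rw [conjTranspose_smul, hA.isHermitian.eq, Complex.star_def, Complex.conj_ofReal]
  · intro x
    rw [smul_mulVec, dotProduct_smul, smul_eq_mul]
    exact mul_nonneg (Complex.zero_le_real.mpr hc) (hA.dotProduct_mulVec_nonneg x)

/-! ### Inner-product algebra -/

lemma ip_zero_right {Kp : Matrix (Fin n) (Fin n) ℂ → Matrix (Fin n) (Fin n) ℂ → ℂ}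
    (h : IsInnerProduct Kp) (X : Matrix (Fin n) (Fin n) ℂ) : Kp X 0 = 0 := by
  have := h.2.2.1 0 X 0
  simpa using this

lemma ip_expand {Kp : Matrix (Fin n) (Fin n) ℂ → Matrix (Fin n) (Fin n) ℂ → ℂ}
    (h : IsInnerProduct Kp) (Y Z : Matrix (Fin n) (Fin n) ℂ) (t : ℝ) :
    (Kp (Y + (t:ℂ) • Z) (Y + (t:ℂ) • Z)).re
      = (Kp Y Y).re + 2 * t * (Kp Y Z).re + t ^ 2 * (Kp Z Z).re := by
  obtain ⟨hal, har, hsr, hsl, hherm, _⟩ := h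
  rw [hal, har, har, hsr, hsr, hsl, hsl]
  have h1 : Kp Z Y = (starRingEnd ℂ) (Kp Y Z) := hherm Y Z
  have h2 : ((starRingEnd ℂ) ((t:ℂ))) = (t:ℂ) := Complex.conj_ofReal t
  rw [h1, h2]
  simp [Complex.add_re, Complex.mul_re, Complex.ofReal_re, Complex.ofReal_im, Complex.conj_re,
    Complex.conj_im]
  ring

lemma ip_nonneg {Kp : Matrix (Fin n) (Fin n) ℂ → Matrix (Fin n) (Fin n) ℂ → ℂ}
    (h : IsInnerProduct Kp) (Z : Matrix (Fin n) (Fin n) ℂ) : 0 ≤ (Kp Z Z).re := by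
  by_cases hZ : Z = 0
  · rw [hZ, ip_zero_right h]; simp
  · exact (h.2.2.2.2.2 Z hZ).le

lemma ip_orth {Kp : Matrix (Fin n) (Fin n) ℂ → Matrix (Fin n) (Fin n) ℂ → ℂ}
    (h : IsInnerProduct Kp) (Y Z : Matrix (Fin n) (Fin n) ℂ)
    (hm : ∀ t : ℝ, (Kp Y Y).re ≤ (Kp (Y + (t:ℂ) • Z) (Y + (t:ℂ) • Z)).re) :
    (Kp Y Z).re = 0 := by
  set γ := (Kp Y Z).re with hγ
  set z := (Kp Z Z).re with hz
  have hz0 : 0 ≤ z := ip_nonneg h Z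
  have key : ∀ t : ℝ, 0 ≤ 2 * t * γ + t ^ 2 * z := by
    intro t
    have := hm t
    rw [ip_expand h Y Z t] at this
    linarith
  by_contra hne
  have hthis := key (-γ / (z + 1))
  have hz1 : (0:ℝ) < z + 1 := by linarith
  have hγ2 : 0 < γ ^ 2 := by positivity
  have e : (2 * (-γ / (z + 1)) * γ + (-γ / (z + 1)) ^ 2 * z) * ((z+1)^2)
      = γ^2 * (-(z+2)) := by
    field_simp
    ring
  have h4 : 0 ≤ γ^2 * (-(z+2)) := by
    rw [← e]
    exact mul_nonneg hthis (sq_nonneg _)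
  nlinarith [mul_pos hγ2 (show (0:ℝ) < z + 2 by linarith)]

lemma ip_add_split {Kp : Matrix (Fin n) (Fin n) ℂ → Matrix (Fin n) (Fin n) ℂ → ℂ}
    (h : IsInnerProduct Kp) (Y Z : Matrix (Fin n) (Fin n) ℂ)
    (hm : ∀ t : ℝ, (Kp Y Y).re ≤ (Kp (Y + (t:ℂ) • Z) (Y + (t:ℂ) • Z)).re) :
    (Kp (Y + Z) (Y + Z)).re = (Kp Y Y).re + (Kp Z Z).re := by
  have horth := ip_orth h Y Z hm
  have hone := ip_expand h Y Z 1
  simp only [Complex.ofReal_one, one_smul] at hone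
  rw [hone, horth]; ring

/-! ### Monotonicity wrappers -/

variable {K : (n : ℕ) → Matrix (Fin n) (Fin n) ℂ →
      Matrix (Fin n) (Fin n) ℂ → Matrix (Fin n) (Fin n) ℂ → ℂ}

lemma mono1 (hK : MonotoneMetricFamily K) {n m : ℕ}
    (V : Matrix (Fin m) (Fin n) ℂ)
    (hV : ((1 : Matrix (Fin n) (Fin n) ℂ) - Vᴴ * V).PosSemidef)
    {σ : Matrix (Fin m) (Fin m) ℂ} (hσ : σ.PosSemidef)
    {ρ : Matrix (Fin n) (Fin n) ℂ} (hρ : ρ.PosDef) (hρt : ρ.trace.re ≤ 1)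
    {τ : Matrix (Fin m) (Fin m) ℂ} (hτ : V * ρ * Vᴴ + σ = τ)
    (hτPD : τ.PosDef) (hτt : τ.trace.re ≤ 1)
    {X : Matrix (Fin n) (Fin n) ℂ} {Z : Matrix (Fin m) (Fin m) ℂ}
    (hZ : V * X * Vᴴ = Z) :
    (K m τ Z Z).re ≤ (K n ρ X X).re := by
  have hT : IsCPTNI (fun W : Matrix (Fin n) (Fin n) ℂ => V * W * Vᴴ) := by
    refine ⟨1, ![V], fun W => ?_, ?_⟩
    · simp
    · simpa using hV
  have h := hK.2 n m _ hT σ hσ ρ hρ hρt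
  simp only [hτ] at h
  have h2 := h hτPD hτt X
  simp only [hZ] at h2
  exact h2

lemma mono2 (hK : MonotoneMetricFamily K) {n m : ℕ}
    (V₁ V₂ : Matrix (Fin m) (Fin n) ℂ)
    (hV : ((1 : Matrix (Fin n) (Fin n) ℂ) - (V₁ᴴ * V₁ + V₂ᴴ * V₂)).PosSemidef)
    {σ : Matrix (Fin m) (Fin m) ℂ} (hσ : σ.PosSemidef)
    {ρ : Matrix (Fin n) (Fin n) ℂ} (hρ : ρ.PosDef) (hρt : ρ.trace.re ≤ 1)
    {τ : Matrix (Fin m) (Fin m) ℂ} (hτ : (V₁ * ρ * V₁ᴴ + V₂ * ρ * V₂ᴴ) + σ = τ)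
    (hτPD : τ.PosDef) (hτt : τ.trace.re ≤ 1)
    {X : Matrix (Fin n) (Fin n) ℂ} {Z : Matrix (Fin m) (Fin m) ℂ}
    (hZ : V₁ * X * V₁ᴴ + V₂ * X * V₂ᴴ = Z) :
    (K m τ Z Z).re ≤ (K n ρ X X).re := by
  have hT : IsCPTNI (fun W : Matrix (Fin n) (Fin n) ℂ => V₁ * W * V₁ᴴ + V₂ * W * V₂ᴴ) := by
    refine ⟨2, ![V₁, V₂], fun W => ?_, ?_⟩
    · simp [Fin.sum_univ_two]
    · simpa [Fin.sum_univ_two] using hV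
  have h := hK.2 n m _ hT σ hσ ρ hρ hρt
  simp only [hτ] at h
  have h2 := h hτPD hτt X
  simp only [hZ] at h2
  exact h2


/-- Exact CPTP "duplication" bound: `K_{(ρ⊕ρ)/2}((X⊕X)/2) ≤ K_ρ(X)`. -/
lemma tensor_bound (hK : MonotoneMetricFamily K) {n : ℕ}
    {ρa : Matrix (Fin n) (Fin n) ℂ} (hρa : ρa.PosDef) (htra : ρa.trace.re ≤ 1)
    (hPDt : (db (((2⁻¹:ℝ):ℂ) • ρa) (((2⁻¹:ℝ):ℂ) • ρa)).PosDef)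
    (htrt : (db (((2⁻¹:ℝ):ℂ) • ρa) (((2⁻¹:ℝ):ℂ) • ρa)).trace.re ≤ 1)
    (Xa : Matrix (Fin n) (Fin n) ℂ) :
    (K (n+n) (db (((2⁻¹:ℝ):ℂ) • ρa) (((2⁻¹:ℝ):ℂ) • ρa))
        (db (((2⁻¹:ℝ):ℂ) • Xa) (((2⁻¹:ℝ):ℂ) • Xa))
        (db (((2⁻¹:ℝ):ℂ) • Xa) (((2⁻¹:ℝ):ℂ) • Xa))).re
      ≤ (K n ρa Xa Xa).re := by
  have hccc : ((((Real.sqrt 2)⁻¹ : ℝ)):ℂ) * ((((Real.sqrt 2)⁻¹ : ℝ)):ℂ) = ((2⁻¹:ℝ):ℂ) := by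
    rw [← Complex.ofReal_mul, ← mul_inv, Real.mul_self_sqrt (by norm_num : (0:ℝ) ≤ 2)]
  have hstar : star ((((Real.sqrt 2)⁻¹ : ℝ)):ℂ) = ((((Real.sqrt 2)⁻¹ : ℝ)):ℂ) := by
    rw [Complex.star_def, Complex.conj_ofReal]
  have key : ∀ M : Matrix (Fin n) (Fin n) ℂ,
      (((((Real.sqrt 2)⁻¹ : ℝ)):ℂ) • u1 n) * M * ((((((Real.sqrt 2)⁻¹ : ℝ)):ℂ)) • u1 n)ᴴ
        + (((((Real.sqrt 2)⁻¹ : ℝ)):ℂ) • u2 n) * M * ((((((Real.sqrt 2)⁻¹ : ℝ)):ℂ)) • u2 n)ᴴ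
      = db (((2⁻¹:ℝ):ℂ) • M) (((2⁻¹:ℝ):ℂ) • M) := by
    intro M
    rw [db]
    simp only [Matrix.conjTranspose_smul, hstar, Matrix.smul_mul, Matrix.mul_smul,
      smul_smul, hccc]
  refine mono2 hK (((((Real.sqrt 2)⁻¹ : ℝ)):ℂ) • u1 n) (((((Real.sqrt 2)⁻¹ : ℝ)):ℂ) • u2 n)
    ?_ (Matrix.PosSemidef.zero) hρa htra ?_ hPDt htrt ?_
  · have he : (((((Real.sqrt 2)⁻¹ : ℝ)):ℂ) • u1 n)ᴴ * (((((Real.sqrt 2)⁻¹ : ℝ)):ℂ) • u1 n)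
        + (((((Real.sqrt 2)⁻¹ : ℝ)):ℂ) • u2 n)ᴴ * (((((Real.sqrt 2)⁻¹ : ℝ)):ℂ) • u2 n)
        = (1 : Matrix (Fin n) (Fin n) ℂ) := by
      simp only [Matrix.conjTranspose_smul, hstar, Matrix.smul_mul, Matrix.mul_smul,
        smul_smul, hccc, u1tu1, u2tu2]
      rw [← add_smul]
      norm_num
    rw [he, sub_self]
    exact .zero
  · rw [key, add_zero]
  · exact key Xa

end Stmt10Aux

open Stmt10Aux in
/-- midpoint convexity of CPTNI monotone metrics. -/
theorem stmt10
    (K : (n : ℕ) → Matrix (Fin n) (Fin n) ℂ →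
      Matrix (Fin n) (Fin n) ℂ → Matrix (Fin n) (Fin n) ℂ → ℂ)
    (hK : MonotoneMetricFamily K)
    (n : ℕ) (ρ₁ ρ₂ : Matrix (Fin n) (Fin n) ℂ)
    (hρ₁ : ρ₁.PosDef) (hρ₂ : ρ₂.PosDef)
    (htr₁ : ρ₁.trace.re ≤ 1) (htr₂ : ρ₂.trace.re ≤ 1)
    (X₁ X₂ : Matrix (Fin n) (Fin n) ℂ) :
    (K n ((1 / 2 : ℂ) • (ρ₁ + ρ₂)) ((1 / 2 : ℂ) • (X₁ + X₂)) ((1 / 2 : ℂ) • (X₁ + X₂))).re ≤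
      (1 / 2 : ℝ) * ((K n ρ₁ X₁ X₁).re + (K n ρ₂ X₂ X₂).re) := by
  classical
  have hgoalcast : (1/2 : ℂ) = ((2⁻¹:ℝ):ℂ) := by norm_num
  rw [hgoalcast]
  have c2 : (0:ℝ) < 2⁻¹ := by norm_num
  have c2' : (0:ℝ) ≤ 2⁻¹ := by norm_num
  have tr_re : ∀ M : Matrix (Fin n) (Fin n) ℂ,
      ((((2⁻¹:ℝ):ℂ)) • M).trace.re = 2⁻¹ * M.trace.re := by
    intro M
    rw [Matrix.trace_smul, smul_eq_mul, Complex.re_ofReal_mul]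
  have hPD1 : ((((2⁻¹:ℝ):ℂ)) • ρ₁).PosDef := smul_posDef hρ₁ c2
  have hPD2 : ((((2⁻¹:ℝ):ℂ)) • ρ₂).PosDef := smul_posDef hρ₂ c2
  have hρtPD : (db ((((2⁻¹:ℝ):ℂ)) • ρ₁) ((((2⁻¹:ℝ):ℂ)) • ρ₂)).PosDef := db_posDef hPD1 hPD2
  have hρt1PD : (db ((((2⁻¹:ℝ):ℂ)) • ρ₁) ((((2⁻¹:ℝ):ℂ)) • ρ₁)).PosDef := db_posDef hPD1 hPD1
  have hρt2PD : (db ((((2⁻¹:ℝ):ℂ)) • ρ₂) ((((2⁻¹:ℝ):ℂ)) • ρ₂)).PosDef := db_posDef hPD2 hPD2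
  have htrρt : (db ((((2⁻¹:ℝ):ℂ)) • ρ₁) ((((2⁻¹:ℝ):ℂ)) • ρ₂)).trace.re ≤ 1 := by
    rw [db_trace, Complex.add_re]; simp only [tr_re]; linarith
  have htrρt1 : (db ((((2⁻¹:ℝ):ℂ)) • ρ₁) ((((2⁻¹:ℝ):ℂ)) • ρ₁)).trace.re ≤ 1 := by
    rw [db_trace, Complex.add_re]; simp only [tr_re]; linarith
  have htrρt2 : (db ((((2⁻¹:ℝ):ℂ)) • ρ₂) ((((2⁻¹:ℝ):ℂ)) • ρ₂)).trace.re ≤ 1 := by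
    rw [db_trace, Complex.add_re]; simp only [tr_re]; linarith
  have hPSD1 : ((((2⁻¹:ℝ):ℂ)) • ρ₁).PosSemidef := smul_posSemidef hρ₁.posSemidef c2'
  have hPSD2 : ((((2⁻¹:ℝ):ℂ)) • ρ₂).PosSemidef := smul_posSemidef hρ₂.posSemidef c2'
  have hVP1 : ((1 : Matrix (Fin (n+n)) (Fin (n+n)) ℂ)
      - (db (1 : Matrix (Fin n) (Fin n) ℂ) 0)ᴴ * db (1 : Matrix (Fin n) (Fin n) ℂ) 0).PosSemidef := by
    have he : (1 : Matrix (Fin (n+n)) (Fin (n+n)) ℂ)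
        - (db (1 : Matrix (Fin n) (Fin n) ℂ) 0)ᴴ * db (1 : Matrix (Fin n) (Fin n) ℂ) 0
        = db (0 : Matrix (Fin n) (Fin n) ℂ) 1 := by
      rw [db_conjTranspose, db_mul, ← db_one (n := n), db_sub]
      simp
    rw [he]
    exact db_posSemidef .zero .one
  have hVP2 : ((1 : Matrix (Fin (n+n)) (Fin (n+n)) ℂ)
      - (db (0 : Matrix (Fin n) (Fin n) ℂ) 1)ᴴ * db (0 : Matrix (Fin n) (Fin n) ℂ) 1).PosSemidef := by
    have he : (1 : Matrix (Fin (n+n)) (Fin (n+n)) ℂ)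
        - (db (0 : Matrix (Fin n) (Fin n) ℂ) 1)ᴴ * db (0 : Matrix (Fin n) (Fin n) ℂ) 1
        = db (1 : Matrix (Fin n) (Fin n) ℂ) 0 := by
      rw [db_conjTranspose, db_mul, ← db_one (n := n), db_sub]
      simp
    rw [he]
    exact db_posSemidef .one .zero
  have hVsw : ((1 : Matrix (Fin (n+n)) (Fin (n+n)) ℂ) - (sw n)ᴴ * sw n).PosSemidef := by
    rw [sw_t_sw, sub_self]
    exact .zero
  have ipt := hK.1 (n+n) _ hρtPD htrρt
  have ipt1 := hK.1 (n+n) _ hρt1PD htrρt1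
  have ipt2 := hK.1 (n+n) _ hρt2PD htrρt2
  -- Step 1 : block-sum map
  have step1 : (K n ((((2⁻¹:ℝ):ℂ)) • (ρ₁ + ρ₂)) ((((2⁻¹:ℝ):ℂ)) • (X₁ + X₂))
        ((((2⁻¹:ℝ):ℂ)) • (X₁ + X₂))).re
      ≤ (K (n+n) (db ((((2⁻¹:ℝ):ℂ)) • ρ₁) ((((2⁻¹:ℝ):ℂ)) • ρ₂))
          (db ((((2⁻¹:ℝ):ℂ)) • X₁) ((((2⁻¹:ℝ):ℂ)) • X₂))
          (db ((((2⁻¹:ℝ):ℂ)) • X₁) ((((2⁻¹:ℝ):ℂ)) • X₂))).re := by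
    refine mono2 hK ((u1 n)ᴴ) ((u2 n)ᴴ) ?_
      (Matrix.PosSemidef.zero (n := Fin n)) hρtPD htrρt ?_
      (smul_posDef (hρ₁.add hρ₂) c2) ?_ ?_
    · rw [conjTranspose_conjTranspose, conjTranspose_conjTranspose, complete, sub_self]
      exact .zero
    · rw [conjTranspose_conjTranspose, conjTranspose_conjTranspose,
        u1_extract, u2_extract, add_zero, smul_add]
    · rw [tr_re, Matrix.trace_add, Complex.add_re]
      linarith
    · rw [conjTranspose_conjTranspose, conjTranspose_conjTranspose,
        u1_extract, u2_extract, smul_add]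
  -- Step 2 : orthogonality of the two corners at ρt
  have hm : ∀ t : ℝ,
      (K (n+n) (db ((((2⁻¹:ℝ):ℂ)) • ρ₁) ((((2⁻¹:ℝ):ℂ)) • ρ₂))
          (db ((((2⁻¹:ℝ):ℂ)) • X₁) 0) (db ((((2⁻¹:ℝ):ℂ)) • X₁) 0)).re
      ≤ (K (n+n) (db ((((2⁻¹:ℝ):ℂ)) • ρ₁) ((((2⁻¹:ℝ):ℂ)) • ρ₂))
          (db ((((2⁻¹:ℝ):ℂ)) • X₁) 0 + (t:ℂ) • db 0 ((((2⁻¹:ℝ):ℂ)) • X₂))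
          (db ((((2⁻¹:ℝ):ℂ)) • X₁) 0 + (t:ℂ) • db 0 ((((2⁻¹:ℝ):ℂ)) • X₂))).re := by
    intro t
    refine mono1 hK (db (1 : Matrix (Fin n) (Fin n) ℂ) 0) hVP1
      (db_posSemidef .zero hPSD2) hρtPD htrρt ?_ hρtPD htrρt ?_
    · rw [db_conjTranspose, db_mul, db_mul, db_add]
      simp
    · rw [db_smul, db_add, db_conjTranspose, db_mul, db_mul]
      simp
  have split := ip_add_split ipt _ _ hm
  have hYY : db ((((2⁻¹:ℝ):ℂ)) • X₁) 0 + db 0 ((((2⁻¹:ℝ):ℂ)) • X₂)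
      = db ((((2⁻¹:ℝ):ℂ)) • X₁) ((((2⁻¹:ℝ):ℂ)) • X₂) := by
    rw [db_add]
    simp
  rw [hYY] at split
  -- Step 3 : compare ρt with ρt1 / ρt2 on the corners
  have b1 : (K (n+n) (db ((((2⁻¹:ℝ):ℂ)) • ρ₁) ((((2⁻¹:ℝ):ℂ)) • ρ₂))
        (db ((((2⁻¹:ℝ):ℂ)) • X₁) 0) (db ((((2⁻¹:ℝ):ℂ)) • X₁) 0)).re
      ≤ (K (n+n) (db ((((2⁻¹:ℝ):ℂ)) • ρ₁) ((((2⁻¹:ℝ):ℂ)) • ρ₁))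
        (db ((((2⁻¹:ℝ):ℂ)) • X₁) 0) (db ((((2⁻¹:ℝ):ℂ)) • X₁) 0)).re := by
    refine mono1 hK (db (1 : Matrix (Fin n) (Fin n) ℂ) 0) hVP1
      (db_posSemidef .zero hPSD2) hρt1PD htrρt1 ?_ hρtPD htrρt ?_
    · rw [db_conjTranspose, db_mul, db_mul, db_add]
      simp
    · rw [db_conjTranspose, db_mul, db_mul]
      simp
  have b2 : (K (n+n) (db ((((2⁻¹:ℝ):ℂ)) • ρ₁) ((((2⁻¹:ℝ):ℂ)) • ρ₂))
        (db 0 ((((2⁻¹:ℝ):ℂ)) • X₂)) (db 0 ((((2⁻¹:ℝ):ℂ)) • X₂))).re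
      ≤ (K (n+n) (db ((((2⁻¹:ℝ):ℂ)) • ρ₂) ((((2⁻¹:ℝ):ℂ)) • ρ₂))
        (db 0 ((((2⁻¹:ℝ):ℂ)) • X₂)) (db 0 ((((2⁻¹:ℝ):ℂ)) • X₂))).re := by
    refine mono1 hK (db (0 : Matrix (Fin n) (Fin n) ℂ) 1) hVP2
      (db_posSemidef hPSD1 .zero) hρt2PD htrρt2 ?_ hρtPD htrρt ?_
    · rw [db_conjTranspose, db_mul, db_mul, db_add]
      simp
    · rw [db_conjTranspose, db_mul, db_mul]
      simp
  -- Step 4 : exact halving at the symmetric state ρt1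
  have e1 : (K (n+n) (db ((((2⁻¹:ℝ):ℂ)) • ρ₁) ((((2⁻¹:ℝ):ℂ)) • ρ₁))
        (db 0 ((((2⁻¹:ℝ):ℂ)) • X₁)) (db 0 ((((2⁻¹:ℝ):ℂ)) • X₁))).re
      ≤ (K (n+n) (db ((((2⁻¹:ℝ):ℂ)) • ρ₁) ((((2⁻¹:ℝ):ℂ)) • ρ₁))
        (db ((((2⁻¹:ℝ):ℂ)) • X₁) 0) (db ((((2⁻¹:ℝ):ℂ)) • X₁) 0)).re := by
    refine mono1 hK (sw n) hVsw (Matrix.PosSemidef.zero) hρt1PD htrρt1 ?_ hρt1PD htrρt1 ?_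
    · rw [sw_db, add_zero]
    · exact sw_db _ _
  have e2 : (K (n+n) (db ((((2⁻¹:ℝ):ℂ)) • ρ₁) ((((2⁻¹:ℝ):ℂ)) • ρ₁))
        (db ((((2⁻¹:ℝ):ℂ)) • X₁) 0) (db ((((2⁻¹:ℝ):ℂ)) • X₁) 0)).re
      ≤ (K (n+n) (db ((((2⁻¹:ℝ):ℂ)) • ρ₁) ((((2⁻¹:ℝ):ℂ)) • ρ₁))
        (db 0 ((((2⁻¹:ℝ):ℂ)) • X₁)) (db 0 ((((2⁻¹:ℝ):ℂ)) • X₁))).re := by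
    refine mono1 hK (sw n) hVsw (Matrix.PosSemidef.zero) hρt1PD htrρt1 ?_ hρt1PD htrρt1 ?_
    · rw [sw_db, add_zero]
    · exact sw_db _ _
  have hm1 : ∀ t : ℝ,
      (K (n+n) (db ((((2⁻¹:ℝ):ℂ)) • ρ₁) ((((2⁻¹:ℝ):ℂ)) • ρ₁))
          (db ((((2⁻¹:ℝ):ℂ)) • X₁) 0) (db ((((2⁻¹:ℝ):ℂ)) • X₁) 0)).re
      ≤ (K (n+n) (db ((((2⁻¹:ℝ):ℂ)) • ρ₁) ((((2⁻¹:ℝ):ℂ)) • ρ₁))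
          (db ((((2⁻¹:ℝ):ℂ)) • X₁) 0 + (t:ℂ) • db 0 ((((2⁻¹:ℝ):ℂ)) • X₁))
          (db ((((2⁻¹:ℝ):ℂ)) • X₁) 0 + (t:ℂ) • db 0 ((((2⁻¹:ℝ):ℂ)) • X₁))).re := by
    intro t
    refine mono1 hK (db (1 : Matrix (Fin n) (Fin n) ℂ) 0) hVP1
      (db_posSemidef .zero hPSD1) hρt1PD htrρt1 ?_ hρt1PD htrρt1 ?_
    · rw [db_conjTranspose, db_mul, db_mul, db_add]
      simp
    · rw [db_smul, db_add, db_conjTranspose, db_mul, db_mul]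
      simp
  have split1 := ip_add_split ipt1 _ _ hm1
  have hW1 : db ((((2⁻¹:ℝ):ℂ)) • X₁) 0 + db 0 ((((2⁻¹:ℝ):ℂ)) • X₁)
      = db ((((2⁻¹:ℝ):ℂ)) • X₁) ((((2⁻¹:ℝ):ℂ)) • X₁) := by
    rw [db_add]
    simp
  rw [hW1] at split1
  have tensor1 := tensor_bound hK hρ₁ htr₁ hρt1PD htrρt1 X₁
  -- Step 5 : exact halving at the symmetric state ρt2
  have f1 : (K (n+n) (db ((((2⁻¹:ℝ):ℂ)) • ρ₂) ((((2⁻¹:ℝ):ℂ)) • ρ₂))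
        (db ((((2⁻¹:ℝ):ℂ)) • X₂) 0) (db ((((2⁻¹:ℝ):ℂ)) • X₂) 0)).re
      ≤ (K (n+n) (db ((((2⁻¹:ℝ):ℂ)) • ρ₂) ((((2⁻¹:ℝ):ℂ)) • ρ₂))
        (db 0 ((((2⁻¹:ℝ):ℂ)) • X₂)) (db 0 ((((2⁻¹:ℝ):ℂ)) • X₂))).re := by
    refine mono1 hK (sw n) hVsw (Matrix.PosSemidef.zero) hρt2PD htrρt2 ?_ hρt2PD htrρt2 ?_
    · rw [sw_db, add_zero]
    · exact sw_db _ _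
  have f2 : (K (n+n) (db ((((2⁻¹:ℝ):ℂ)) • ρ₂) ((((2⁻¹:ℝ):ℂ)) • ρ₂))
        (db 0 ((((2⁻¹:ℝ):ℂ)) • X₂)) (db 0 ((((2⁻¹:ℝ):ℂ)) • X₂))).re
      ≤ (K (n+n) (db ((((2⁻¹:ℝ):ℂ)) • ρ₂) ((((2⁻¹:ℝ):ℂ)) • ρ₂))
        (db ((((2⁻¹:ℝ):ℂ)) • X₂) 0) (db ((((2⁻¹:ℝ):ℂ)) • X₂) 0)).re := by
    refine mono1 hK (sw n) hVsw (Matrix.PosSemidef.zero) hρt2PD htrρt2 ?_ hρt2PD htrρt2 ?_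
    · rw [sw_db, add_zero]
    · exact sw_db _ _
  have hm2 : ∀ t : ℝ,
      (K (n+n) (db ((((2⁻¹:ℝ):ℂ)) • ρ₂) ((((2⁻¹:ℝ):ℂ)) • ρ₂))
          (db ((((2⁻¹:ℝ):ℂ)) • X₂) 0) (db ((((2⁻¹:ℝ):ℂ)) • X₂) 0)).re
      ≤ (K (n+n) (db ((((2⁻¹:ℝ):ℂ)) • ρ₂) ((((2⁻¹:ℝ):ℂ)) • ρ₂))
          (db ((((2⁻¹:ℝ):ℂ)) • X₂) 0 + (t:ℂ) • db 0 ((((2⁻¹:ℝ):ℂ)) • X₂))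
          (db ((((2⁻¹:ℝ):ℂ)) • X₂) 0 + (t:ℂ) • db 0 ((((2⁻¹:ℝ):ℂ)) • X₂))).re := by
    intro t
    refine mono1 hK (db (1 : Matrix (Fin n) (Fin n) ℂ) 0) hVP1
      (db_posSemidef .zero hPSD2) hρt2PD htrρt2 ?_ hρt2PD htrρt2 ?_
    · rw [db_conjTranspose, db_mul, db_mul, db_add]
      simp
    · rw [db_smul, db_add, db_conjTranspose, db_mul, db_mul]
      simp
  have split2 := ip_add_split ipt2 _ _ hm2
  have hW2 : db ((((2⁻¹:ℝ):ℂ)) • X₂) 0 + db 0 ((((2⁻¹:ℝ):ℂ)) • X₂)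
      = db ((((2⁻¹:ℝ):ℂ)) • X₂) ((((2⁻¹:ℝ):ℂ)) • X₂) := by
    rw [db_add]
    simp
  rw [hW2] at split2
  have tensor2 := tensor_bound hK hρ₂ htr₂ hρt2PD htrρt2 X₂
  -- Conclusion
  linarith [step1, split, b1, b2, e1, e2, split1, tensor1, f1, f2, split2, tensor2]
end

section
/- Let (K^(n))_{n≥1} be a family of CPTNI monotone metrics and fix a complex n×n matrix X. Then the map ρ ↦ K^(n)_ρ(X, X) is monotonically decreasing on positive definite n×n matrices with trace at most 1: if ρ ≤ ρ' (with both ρ and ρ' positive definite and Tr ρ' ≤ 1), then K^(n)_{ρ'}(X, X) ≤ K^(n)_ρ(X, X). Moreover this map is convex: K^(n)_{pρ₁+(1-p)ρ₂}(X, X) ≤ p K^(n)_{ρ₁}(X, X) + (1-p) K^(n)_{ρ₂}(X, X) for 0 ≤ p ≤ 1. -/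
open Matrix ComplexOrder

namespace Stmt11H

variable {n : ℕ}

/-! ### Scalar and positivity helpers -/

lemma psd_trace_re_nonneg {N : ℕ} {M : Matrix (Fin N) (Fin N) ℂ} (h : M.PosSemidef) :
    0 ≤ M.trace.re := by
  rw [Matrix.trace, Complex.re_sum]
  refine Finset.sum_nonneg fun i _ => ?_
  have h2 := h.dotProduct_mulVec_nonneg (Pi.single i 1)
  have h3 : star (Pi.single i 1 : Fin N → ℂ) ⬝ᵥ (M *ᵥ Pi.single i 1) = M i i := by
    have hs : (star (Pi.single i 1 : Fin N → ℂ)) = Pi.single i 1 := by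
      ext j; by_cases hj : j = i <;> simp [hj, Pi.single_apply]
    rw [hs, single_dotProduct, Matrix.mulVec_single]; simp
  rw [h3] at h2
  have := (Complex.nonneg_iff.mp h2).1
  simpa [Matrix.diag] using this

lemma smul_posDef {N : ℕ} {M : Matrix (Fin N) (Fin N) ℂ} (hM : M.PosDef) {c : ℝ} (hc : 0 < c) :
    ((c : ℂ) • M).PosDef := by
  refine Matrix.PosDef.of_dotProduct_mulVec_pos ?_ ?_
  · show ((c:ℂ) • M)ᴴ = (c:ℂ) • M
    rw [Matrix.conjTranspose_smul, Complex.star_def, Complex.conj_ofReal, hM.1.eq]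
  · intro x hx
    rw [Matrix.smul_mulVec, dotProduct_smul]
    have h := hM.dotProduct_mulVec_pos hx
    rw [Complex.lt_def] at h ⊢
    constructor
    · simp only [smul_eq_mul, Complex.mul_re, Complex.ofReal_re, Complex.ofReal_im,
        Complex.zero_re, zero_mul, sub_zero] at h ⊢
      nlinarith [h.1]
    · simp only [smul_eq_mul, Complex.mul_im, Complex.ofReal_re, Complex.ofReal_im,
        Complex.zero_im, zero_mul, add_zero] at h ⊢
      rw [← h.2]; ring

lemma smul_trace_re (c : ℝ) {N : ℕ} (M : Matrix (Fin N) (Fin N) ℂ) :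
    ((c : ℂ) • M).trace.re = c * M.trace.re := by
  rw [Matrix.trace_smul, smul_eq_mul]
  simp [Complex.mul_re]

/-! ### Block matrices -/

def es (n : ℕ) : Fin n ⊕ Fin n ≃ Fin (n + n) := finSumFinEquiv

def dd (A B : Matrix (Fin n) (Fin n) ℂ) : Matrix (Fin (n + n)) (Fin (n + n)) ℂ :=
  (fromBlocks A 0 0 B).submatrix (es n).symm (es n).symm

def Up (n : ℕ) : Matrix (Fin (n + n)) (Fin n) ℂ :=
  (fromRows 1 0).submatrix (es n).symm id

def Lo (n : ℕ) : Matrix (Fin (n + n)) (Fin n) ℂ :=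
  (fromRows 0 1).submatrix (es n).symm id

lemma submul_left {l : ℕ} (M : Matrix (Fin n ⊕ Fin n) (Fin l) ℂ) (N : Matrix (Fin l) (Fin l) ℂ) :
    (M.submatrix (es n).symm id) * N = (M * N).submatrix (es n).symm id := by
  ext i j; simp [Matrix.mul_apply]

lemma submul_rl {l : ℕ} (M : Matrix (Fin n ⊕ Fin n) (Fin l) ℂ) (N : Matrix (Fin l) (Fin n ⊕ Fin n) ℂ) :
    (M.submatrix (es n).symm id) * (N.submatrix id (es n).symm)
      = (M * N).submatrix (es n).symm (es n).symm := by
  ext i j; simp [Matrix.mul_apply]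

lemma submul_mid {l : ℕ} (M : Matrix (Fin l) (Fin n ⊕ Fin n) ℂ) (N : Matrix (Fin n ⊕ Fin n) (Fin l) ℂ) :
    (M.submatrix id (es n).symm) * (N.submatrix (es n).symm id) = M * N := by
  ext i j
  simp only [Matrix.mul_apply, Matrix.submatrix_apply, id_eq]
  exact Equiv.sum_comp (es n).symm fun s => M i s * N s j

lemma submul_mid2 {l : ℕ} (M : Matrix (Fin l) (Fin n ⊕ Fin n) ℂ)
    (N : Matrix (Fin n ⊕ Fin n) (Fin n ⊕ Fin n) ℂ) :
    (M.submatrix id (es n).symm) * (N.submatrix (es n).symm (es n).symm)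
      = (M * N).submatrix id (es n).symm := by
  ext i j
  simp only [Matrix.mul_apply, Matrix.submatrix_apply, id_eq]
  exact Equiv.sum_comp (es n).symm fun s => M i s * N s ((es n).symm j)

lemma submul_sq (M N : Matrix (Fin n ⊕ Fin n) (Fin n ⊕ Fin n) ℂ) :
    (M.submatrix (es n).symm (es n).symm) * (N.submatrix (es n).symm (es n).symm)
      = (M * N).submatrix (es n).symm (es n).symm := by
  ext i j
  simp only [Matrix.mul_apply, Matrix.submatrix_apply]
  exact Equiv.sum_comp (es n).symm fun s => M ((es n).symm i) s * N s ((es n).symm j)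

lemma Up_conjT : (Up n)ᴴ = (fromCols 1 0).submatrix id (es n).symm := by
  unfold Up
  rw [Matrix.conjTranspose_submatrix, Matrix.conjTranspose_fromRows_eq_fromCols_conjTranspose,
    Matrix.conjTranspose_one, Matrix.conjTranspose_zero]

lemma Lo_conjT : (Lo n)ᴴ = (fromCols 0 1).submatrix id (es n).symm := by
  unfold Lo
  rw [Matrix.conjTranspose_submatrix, Matrix.conjTranspose_fromRows_eq_fromCols_conjTranspose,
    Matrix.conjTranspose_one, Matrix.conjTranspose_zero]

lemma Up_mul_mul (Z : Matrix (Fin n) (Fin n) ℂ) : Up n * Z * (Up n)ᴴ = dd Z 0 := by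
  rw [Up_conjT]
  unfold Up dd
  rw [submul_left, submul_rl, Matrix.fromRows_mul, Matrix.fromRows_mul_fromCols]
  simp

lemma Lo_mul_mul (Z : Matrix (Fin n) (Fin n) ℂ) : Lo n * Z * (Lo n)ᴴ = dd 0 Z := by
  rw [Lo_conjT]
  unfold Lo dd
  rw [submul_left, submul_rl, Matrix.fromRows_mul, Matrix.fromRows_mul_fromCols]
  simp

lemma UpH_mul_Up : (Up n)ᴴ * Up n = 1 := by
  rw [Up_conjT]; unfold Up
  rw [submul_mid, Matrix.fromCols_mul_fromRows]
  simp

lemma LoH_mul_Lo : (Lo n)ᴴ * Lo n = 1 := by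
  rw [Lo_conjT]; unfold Lo
  rw [submul_mid, Matrix.fromCols_mul_fromRows]
  simp

lemma UpH_dd_Up (A B : Matrix (Fin n) (Fin n) ℂ) : (Up n)ᴴ * dd A B * Up n = A := by
  rw [Up_conjT]; unfold Up dd
  rw [submul_mid2, submul_mid, Matrix.fromCols_mul_fromBlocks,
    Matrix.fromCols_mul_fromRows]
  simp

lemma LoH_dd_Lo (A B : Matrix (Fin n) (Fin n) ℂ) : (Lo n)ᴴ * dd A B * Lo n = B := by
  rw [Lo_conjT]; unfold Lo dd
  rw [submul_mid2, submul_mid, Matrix.fromCols_mul_fromBlocks,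
    Matrix.fromCols_mul_fromRows]
  simp

lemma dd_add (A B C D : Matrix (Fin n) (Fin n) ℂ) : dd A B + dd C D = dd (A + C) (B + D) := by
  unfold dd
  have : fromBlocks A (0 : Matrix (Fin n) (Fin n) ℂ) 0 B + fromBlocks C 0 0 D
      = fromBlocks (A + C) 0 0 (B + D) := by
    rw [Matrix.fromBlocks_add, add_zero]
  rw [← this]; ext i j; simp

lemma dd_sub (A B C D : Matrix (Fin n) (Fin n) ℂ) : dd A B - dd C D = dd (A - C) (B - D) := by
  unfold dd
  have : fromBlocks A (0 : Matrix (Fin n) (Fin n) ℂ) 0 B - fromBlocks C 0 0 D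
      = fromBlocks (A - C) 0 0 (B - D) := by
    ext i j
    cases i <;> cases j <;> simp [Matrix.fromBlocks]
  rw [← this]; ext i j; simp

lemma dd_smul (c : ℂ) (A B : Matrix (Fin n) (Fin n) ℂ) : c • dd A B = dd (c • A) (c • B) := by
  unfold dd
  have : c • fromBlocks A (0 : Matrix (Fin n) (Fin n) ℂ) 0 B = fromBlocks (c • A) 0 0 (c • B) := by
    rw [Matrix.fromBlocks_smul, smul_zero]
  rw [← this]; ext i j; simp

lemma dd_mul (A B C D : Matrix (Fin n) (Fin n) ℂ) : dd A B * dd C D = dd (A * C) (B * D) := by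
  unfold dd
  rw [submul_sq, Matrix.fromBlocks_multiply]
  simp

lemma dd_conjT (A B : Matrix (Fin n) (Fin n) ℂ) : (dd A B)ᴴ = dd Aᴴ Bᴴ := by
  unfold dd
  rw [Matrix.conjTranspose_submatrix, Matrix.fromBlocks_conjTranspose]
  simp

lemma dd_one : dd (1 : Matrix (Fin n) (Fin n) ℂ) 1 = 1 := by
  unfold dd
  rw [Matrix.fromBlocks_one]
  exact Matrix.submatrix_one_equiv (es n).symm

lemma dd_trace (A B : Matrix (Fin n) (Fin n) ℂ) : (dd A B).trace = A.trace + B.trace := by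
  unfold dd
  have h1 : ((fromBlocks A (0:Matrix (Fin n) (Fin n) ℂ) 0 B).submatrix (es n).symm (es n).symm).trace
      = (fromBlocks A (0:Matrix (Fin n) (Fin n) ℂ) 0 B).trace := by
    rw [Matrix.trace, Matrix.trace]
    exact Fintype.sum_equiv (es n).symm _ _ (fun i => rfl)
  rw [h1, Matrix.trace, Fintype.sum_sum_type]
  simp [Matrix.diag, Matrix.trace]

lemma posDef_submatrix_equiv {α β : Type*} [Fintype α] [Fintype β] [DecidableEq α] [DecidableEq β]
    {M : Matrix α α ℂ} (hM : M.PosDef) (f : β ≃ α) : (M.submatrix f f).PosDef := by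
  refine Matrix.PosDef.of_dotProduct_mulVec_pos ?_ ?_
  · show (M.submatrix f f)ᴴ = M.submatrix f f
    rw [Matrix.conjTranspose_submatrix, hM.1.eq]
  · intro x hx
    have hx' : (fun a => x (f.symm a)) ≠ 0 := by
      intro hcontra
      apply hx; funext b
      have := congrFun hcontra (f b)
      simpa using this
    have h := hM.dotProduct_mulVec_pos hx'
    have heq : star x ⬝ᵥ (M.submatrix f f *ᵥ x)
        = star (fun a => x (f.symm a)) ⬝ᵥ (M *ᵥ fun a => x (f.symm a)) := by
      simp only [dotProduct, Matrix.mulVec, Matrix.submatrix_apply, Pi.star_apply]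
      refine Fintype.sum_equiv f (fun i : β => star (x i) * ∑ j, M (f i) (f j) * x j)
        (fun a : α => star (x (f.symm a)) * ∑ b, M a b * x (f.symm b)) (fun i => ?_)
      simp only [Equiv.symm_apply_apply]
      congr 1
      exact Fintype.sum_equiv f (fun j : β => M (f i) (f j) * x j)
        (fun b : α => M (f i) b * x (f.symm b)) (fun j => by simp)
    rw [heq]; exact h

lemma fromBlocks_posDef {A B : Matrix (Fin n) (Fin n) ℂ} (hA : A.PosDef) (hB : B.PosDef) :
    (fromBlocks A 0 0 B).PosDef := by
  refine Matrix.PosDef.of_dotProduct_mulVec_pos ?_ ?_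
  · show (fromBlocks A 0 0 B)ᴴ = fromBlocks A 0 0 B
    rw [Matrix.fromBlocks_conjTranspose]
    rw [hA.1.eq, hB.1.eq]
    simp
  · intro x hx
    rw [Matrix.fromBlocks_mulVec]
    have hsplit : star x ⬝ᵥ Sum.elim (A *ᵥ (x ∘ Sum.inl) + (0 : Matrix (Fin n) (Fin n) ℂ) *ᵥ (x ∘ Sum.inr))
        ((0 : Matrix (Fin n) (Fin n) ℂ) *ᵥ (x ∘ Sum.inl) + B *ᵥ (x ∘ Sum.inr))
        = star (x ∘ Sum.inl) ⬝ᵥ (A *ᵥ (x ∘ Sum.inl)) + star (x ∘ Sum.inr) ⬝ᵥ (B *ᵥ (x ∘ Sum.inr)) := by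
      simp [dotProduct, Fintype.sum_sum_type]
    rw [hsplit]
    by_cases h1 : (x ∘ Sum.inl) = 0
    · have h2 : (x ∘ Sum.inr) ≠ 0 := by
        intro h2; apply hx; funext s
        cases s with
        | inl a => exact congrFun h1 a
        | inr b => exact congrFun h2 b
      exact add_pos_of_nonneg_of_pos (hA.posSemidef.dotProduct_mulVec_nonneg _) (hB.dotProduct_mulVec_pos h2)
    · exact add_pos_of_pos_of_nonneg (hA.dotProduct_mulVec_pos h1) (hB.posSemidef.dotProduct_mulVec_nonneg _)

lemma dd_posDef {A B : Matrix (Fin n) (Fin n) ℂ} (hA : A.PosDef) (hB : B.PosDef) :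
    (dd A B).PosDef :=
  posDef_submatrix_equiv (fromBlocks_posDef hA hB) _

lemma dd_decomp (A B : Matrix (Fin n) (Fin n) ℂ) :
    dd A B = Up n * A * (Up n)ᴴ + Lo n * B * (Lo n)ᴴ := by
  rw [Up_mul_mul, Lo_mul_mul, dd_add, add_zero, zero_add]

lemma dd_posSemidef {A B : Matrix (Fin n) (Fin n) ℂ} (hA : A.PosSemidef) (hB : B.PosSemidef) :
    (dd A B).PosSemidef := by
  rw [dd_decomp]
  exact (hA.mul_mul_conjTranspose_same _).add (hB.mul_mul_conjTranspose_same _)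

/-! ### CPTNI and inner-product helpers -/

lemma isCPTNI_single {a b : ℕ} (A : Matrix (Fin b) (Fin a) ℂ)
    (h : ((1 : Matrix (Fin a) (Fin a) ℂ) - Aᴴ * A).PosSemidef) :
    IsCPTNI (fun X : Matrix (Fin a) (Fin a) ℂ => A * X * Aᴴ) :=
  ⟨1, ![A], fun X => by simp [Fin.sum_univ_one], by simpa [Fin.sum_univ_one] using h⟩

lemma isCPTNI_pair {a b : ℕ} (A B : Matrix (Fin b) (Fin a) ℂ)
    (h : ((1 : Matrix (Fin a) (Fin a) ℂ) - (Aᴴ * A + Bᴴ * B)).PosSemidef) :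
    IsCPTNI (fun X : Matrix (Fin a) (Fin a) ℂ => A * X * Aᴴ + B * X * Bᴴ) :=
  ⟨2, ![A, B], fun X => by simp [Fin.sum_univ_two], by simpa [Fin.sum_univ_two] using h⟩

variable {N : ℕ} {KK : Matrix (Fin N) (Fin N) ℂ → Matrix (Fin N) (Fin N) ℂ → ℂ}

lemma IP_zero (hIP : IsInnerProduct KK) : KK 0 0 = 0 := by
  have h := hIP.1 0 0 0
  rw [add_zero] at h
  have h2 : KK 0 0 + KK 0 0 = KK 0 0 + 0 := by rw [add_zero]; exact h.symm
  exact add_left_cancel h2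

lemma IP_expand_re (hIP : IsInnerProduct KK) (x y : Matrix (Fin N) (Fin N) ℂ) :
    (KK (x + y) (x + y)).re = (KK x x).re + (KK y y).re + 2 * (KK x y).re := by
  rw [hIP.1, hIP.2.1, hIP.2.1, hIP.2.2.2.2.1 x y]
  simp only [Complex.add_re, Complex.conj_re]
  ring

lemma IP_real_smul_re (hIP : IsInnerProduct KK) (t : ℝ) (x : Matrix (Fin N) (Fin N) ℂ) :
    (KK ((t : ℂ) • x) ((t : ℂ) • x)).re = t ^ 2 * (KK x x).re := by
  rw [hIP.2.2.1, hIP.2.2.2.1, Complex.conj_ofReal, ← mul_assoc, ← Complex.ofReal_mul]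
  rw [show t * t = t ^ 2 by ring]
  simp [Complex.mul_re, ← Complex.ofReal_pow]

lemma IP_cross_zero (hIP : IsInnerProduct KK) (v w : Matrix (Fin N) (Fin N) ℂ)
    (hE : ∀ t : ℝ, (KK ((t : ℂ) • v) ((t : ℂ) • v)).re ≤ (KK (w + (t : ℂ) • v) (w + (t : ℂ) • v)).re) :
    (KK v w).re = 0 := by
  have key : ∀ t : ℝ, 0 ≤ (KK w w).re + 2 * (t * (KK v w).re) := by
    intro t
    have h := hE t
    rw [IP_expand_re hIP w ((t : ℂ) • v)] at h
    have h2 : (KK w ((t : ℂ) • v)).re = t * (KK v w).re := by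
      rw [hIP.2.2.1, hIP.2.2.2.2.1 v w]
      simp [Complex.mul_re]
    rw [h2, IP_real_smul_re hIP t v] at h
    nlinarith [h]
  by_contra hne
  have hs : (KK v w).re ≠ 0 := hne
  have hkey := key (-(((KK w w).re + 1) / (2 * (KK v w).re)))
  have ht : (-(((KK w w).re + 1) / (2 * (KK v w).re))) * (KK v w).re = -(((KK w w).re + 1) / 2) := by
    field_simp
  rw [ht] at hkey
  linarith


/-! ### Main block lemmas, depending on a monotone metric family -/

variable {K : (n : ℕ) → Matrix (Fin n) (Fin n) ℂ →
      Matrix (Fin n) (Fin n) ℂ → Matrix (Fin n) (Fin n) ℂ → ℂ}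

/-- Evaluation of the metric at a block-diagonal base on block-diagonal vectors:
it splits as the sum of the two corner evaluations. -/
lemma blockEval (hK : MonotoneMetricFamily K) {n : ℕ} {ρa ρb : Matrix (Fin n) (Fin n) ℂ}
    (ha : ρa.PosDef) (hb : ρb.PosDef) (htr : ρa.trace.re + ρb.trace.re ≤ 1)
    (Za Zb : Matrix (Fin n) (Fin n) ℂ) :
    (K (n + n) (dd ρa ρb) (dd Za Zb) (dd Za Zb)).re
      = (K n ρa Za Za).re + (K n ρb Zb Zb).re := by
  have hta : 0 ≤ ρa.trace.re := psd_trace_re_nonneg ha.posSemidef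
  have htb : 0 ≤ ρb.trace.re := psd_trace_re_nonneg hb.posSemidef
  have htra : ρa.trace.re ≤ 1 := by linarith
  have htrb : ρb.trace.re ≤ 1 := by linarith
  have hR : (dd ρa ρb).PosDef := dd_posDef ha hb
  have hRtr : (dd ρa ρb).trace.re ≤ 1 := by
    rw [dd_trace, Complex.add_re]; linarith
  have hIP2 := hK.1 (n + n) _ hR hRtr
  -- upper corner evaluation
  have corner₁ : ∀ W : Matrix (Fin n) (Fin n) ℂ,
      (K (n + n) (dd ρa ρb) (dd W 0) (dd W 0)).re = (K n ρa W W).re := by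
    intro W
    refine le_antisymm ?_ ?_
    · have hT : IsCPTNI (fun Z : Matrix (Fin n) (Fin n) ℂ => Up n * Z * (Up n)ᴴ) :=
        isCPTNI_single _ (by rw [UpH_mul_Up, sub_self]; exact Matrix.PosSemidef.zero)
      have hfix : Up n * ρa * (Up n)ᴴ + dd 0 ρb = dd ρa ρb := by
        rw [Up_mul_mul, dd_add, add_zero, zero_add]
      have hfixW : Up n * W * (Up n)ᴴ = dd W 0 := by
        rw [Up_mul_mul]
      have h := hK.2 n (n + n) _ hT (dd 0 ρb)
        (dd_posSemidef Matrix.PosSemidef.zero hb.posSemidef)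
        ρa ha htra (by rw [hfix]; exact hR) (by rw [hfix]; exact hRtr) W
      rw [hfix, hfixW] at h
      exact h
    · have hT : IsCPTNI (fun Y : Matrix (Fin (n + n)) (Fin (n + n)) ℂ
          => (Up n)ᴴ * Y * ((Up n)ᴴ)ᴴ) := by
        refine isCPTNI_single _ ?_
        rw [Matrix.conjTranspose_conjTranspose]
        have hUU : Up n * (Up n)ᴴ = dd 1 0 := by
          have h0 := Up_mul_mul (1 : Matrix (Fin n) (Fin n) ℂ)
          rwa [Matrix.mul_one] at h0
        rw [hUU, ← dd_one, dd_sub, sub_self, sub_zero]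
        exact dd_posSemidef Matrix.PosSemidef.zero Matrix.PosSemidef.one
      have hfix : (Up n)ᴴ * dd ρa ρb * ((Up n)ᴴ)ᴴ + 0 = ρa := by
        rw [Matrix.conjTranspose_conjTranspose, UpH_dd_Up, add_zero]
      have hfixW : (Up n)ᴴ * dd W 0 * ((Up n)ᴴ)ᴴ = W := by
        rw [Matrix.conjTranspose_conjTranspose, UpH_dd_Up]
      have h := hK.2 (n + n) n _ hT 0 Matrix.PosSemidef.zero (dd ρa ρb) hR hRtr
        (by rw [hfix]; exact ha) (by rw [hfix]; exact htra) (dd W 0)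
      rw [hfix, hfixW] at h
      exact h
  -- lower corner evaluation
  have corner₂ : ∀ W : Matrix (Fin n) (Fin n) ℂ,
      (K (n + n) (dd ρa ρb) (dd 0 W) (dd 0 W)).re = (K n ρb W W).re := by
    intro W
    refine le_antisymm ?_ ?_
    · have hT : IsCPTNI (fun Z : Matrix (Fin n) (Fin n) ℂ => Lo n * Z * (Lo n)ᴴ) :=
        isCPTNI_single _ (by rw [LoH_mul_Lo, sub_self]; exact Matrix.PosSemidef.zero)
      have hfix : Lo n * ρb * (Lo n)ᴴ + dd ρa 0 = dd ρa ρb := by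
        rw [Lo_mul_mul, dd_add, add_zero, zero_add]
      have hfixW : Lo n * W * (Lo n)ᴴ = dd 0 W := by
        rw [Lo_mul_mul]
      have h := hK.2 n (n + n) _ hT (dd ρa 0)
        (dd_posSemidef ha.posSemidef Matrix.PosSemidef.zero)
        ρb hb htrb (by rw [hfix]; exact hR) (by rw [hfix]; exact hRtr) W
      rw [hfix, hfixW] at h
      exact h
    · have hT : IsCPTNI (fun Y : Matrix (Fin (n + n)) (Fin (n + n)) ℂ
          => (Lo n)ᴴ * Y * ((Lo n)ᴴ)ᴴ) := by
        refine isCPTNI_single _ ?_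
        rw [Matrix.conjTranspose_conjTranspose]
        have hLL : Lo n * (Lo n)ᴴ = dd 0 1 := by
          have h0 := Lo_mul_mul (1 : Matrix (Fin n) (Fin n) ℂ)
          rwa [Matrix.mul_one] at h0
        rw [hLL, ← dd_one, dd_sub, sub_self, sub_zero]
        exact dd_posSemidef Matrix.PosSemidef.one Matrix.PosSemidef.zero
      have hfix : (Lo n)ᴴ * dd ρa ρb * ((Lo n)ᴴ)ᴴ + 0 = ρb := by
        rw [Matrix.conjTranspose_conjTranspose, LoH_dd_Lo, add_zero]
      have hfixW : (Lo n)ᴴ * dd 0 W * ((Lo n)ᴴ)ᴴ = W := by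
        rw [Matrix.conjTranspose_conjTranspose, LoH_dd_Lo]
      have h := hK.2 (n + n) n _ hT 0 Matrix.PosSemidef.zero (dd ρa ρb) hR hRtr
        (by rw [hfix]; exact hb) (by rw [hfix]; exact htrb) (dd 0 W)
      rw [hfix, hfixW] at h
      exact h
  -- cross term vanishes
  have hcross : (K (n + n) (dd ρa ρb) (dd Za 0) (dd 0 Zb)).re = 0 := by
    have hP : ((dd (1 : Matrix (Fin n) (Fin n) ℂ) 0))ᴴ = dd 1 0 := by
      rw [dd_conjT, Matrix.conjTranspose_one, Matrix.conjTranspose_zero]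
    have hT : IsCPTNI (fun Y : Matrix (Fin (n + n)) (Fin (n + n)) ℂ
        => dd 1 0 * Y * (dd (1 : Matrix (Fin n) (Fin n) ℂ) 0)ᴴ) := by
      refine isCPTNI_single _ ?_
      rw [hP, dd_mul, one_mul, mul_zero, ← dd_one, dd_sub, sub_self, sub_zero]
      exact dd_posSemidef Matrix.PosSemidef.zero Matrix.PosSemidef.one
    have hfix : dd 1 0 * dd ρa ρb * (dd (1 : Matrix (Fin n) (Fin n) ℂ) 0)ᴴ + dd 0 ρb = dd ρa ρb := by
      rw [hP, dd_mul, dd_mul, one_mul, zero_mul, mul_one, mul_zero, dd_add, add_zero, zero_add]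
    have h := hK.2 (n + n) (n + n) _ hT (dd 0 ρb)
      (dd_posSemidef Matrix.PosSemidef.zero hb.posSemidef)
      (dd ρa ρb) hR hRtr (by rw [hfix]; exact hR) (by rw [hfix]; exact hRtr)
    refine IP_cross_zero hIP2 (dd Za 0) (dd 0 Zb) (fun t => ?_)
    have hY : dd 0 Zb + (t : ℂ) • dd Za 0 = dd ((t : ℂ) • Za) Zb := by
      rw [dd_smul, smul_zero, dd_add, zero_add, add_zero]
    have hEY : dd 1 0 * dd ((t : ℂ) • Za) Zb * (dd (1 : Matrix (Fin n) (Fin n) ℂ) 0)ᴴ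
          = (t : ℂ) • dd Za 0 := by
      rw [hP, dd_mul, dd_mul, one_mul, zero_mul, mul_one, mul_zero, dd_smul, smul_zero]
    have h2 := h (dd ((t : ℂ) • Za) Zb)
    rw [hfix, hEY] at h2
    rw [hY]
    exact h2
  have hsum : dd Za 0 + dd 0 Zb = dd Za Zb := by
    rw [dd_add, add_zero, zero_add]
  calc (K (n + n) (dd ρa ρb) (dd Za Zb) (dd Za Zb)).re
      = (K (n + n) (dd ρa ρb) (dd Za 0 + dd 0 Zb) (dd Za 0 + dd 0 Zb)).re := by rw [hsum]
    _ = (K (n + n) (dd ρa ρb) (dd Za 0) (dd Za 0)).re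
        + (K (n + n) (dd ρa ρb) (dd 0 Zb) (dd 0 Zb)).re
        + 2 * (K (n + n) (dd ρa ρb) (dd Za 0) (dd 0 Zb)).re := IP_expand_re hIP2 _ _
    _ = (K n ρa Za Za).re + (K n ρb Zb Zb).re := by
        rw [hcross, corner₁ Za, corner₂ Zb]; ring

/-- Partial-trace contraction. -/
lemma ptrace_le (hK : MonotoneMetricFamily K) {n : ℕ} {ρa ρb : Matrix (Fin n) (Fin n) ℂ}
    (ha : ρa.PosDef) (hb : ρb.PosDef) (htr : ρa.trace.re + ρb.trace.re ≤ 1)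
    (Ya Yb : Matrix (Fin n) (Fin n) ℂ) :
    (K n (ρa + ρb) (Ya + Yb) (Ya + Yb)).re
      ≤ (K (n + n) (dd ρa ρb) (dd Ya Yb) (dd Ya Yb)).re := by
  have hR : (dd ρa ρb).PosDef := dd_posDef ha hb
  have hRtr : (dd ρa ρb).trace.re ≤ 1 := by
    rw [dd_trace, Complex.add_re]; linarith
  have hT : IsCPTNI (fun Y : Matrix (Fin (n + n)) (Fin (n + n)) ℂ
      => (Up n)ᴴ * Y * ((Up n)ᴴ)ᴴ + (Lo n)ᴴ * Y * ((Lo n)ᴴ)ᴴ) := by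
    refine isCPTNI_pair _ _ ?_
    rw [Matrix.conjTranspose_conjTranspose, Matrix.conjTranspose_conjTranspose]
    have hUU : Up n * (Up n)ᴴ = dd 1 0 := by
      have h0 := Up_mul_mul (1 : Matrix (Fin n) (Fin n) ℂ); rwa [Matrix.mul_one] at h0
    have hLL : Lo n * (Lo n)ᴴ = dd 0 1 := by
      have h0 := Lo_mul_mul (1 : Matrix (Fin n) (Fin n) ℂ); rwa [Matrix.mul_one] at h0
    rw [hUU, hLL, dd_add, add_zero, zero_add, dd_one, sub_self]
    exact Matrix.PosSemidef.zero
  have hfix : (Up n)ᴴ * dd ρa ρb * ((Up n)ᴴ)ᴴ + (Lo n)ᴴ * dd ρa ρb * ((Lo n)ᴴ)ᴴ + 0 = ρa + ρb := by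
    rw [Matrix.conjTranspose_conjTranspose, Matrix.conjTranspose_conjTranspose,
      UpH_dd_Up, LoH_dd_Lo, add_zero]
  have hfixY : (Up n)ᴴ * dd Ya Yb * ((Up n)ᴴ)ᴴ + (Lo n)ᴴ * dd Ya Yb * ((Lo n)ᴴ)ᴴ = Ya + Yb := by
    rw [Matrix.conjTranspose_conjTranspose, Matrix.conjTranspose_conjTranspose,
      UpH_dd_Up, LoH_dd_Lo]
  have hsum_pd : (ρa + ρb).PosDef := ha.add hb
  have hsum_tr : (ρa + ρb).trace.re ≤ 1 := by
    rw [Matrix.trace_add, Complex.add_re]; linarith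
  have h := hK.2 (n + n) n _ hT 0 Matrix.PosSemidef.zero (dd ρa ρb) hR hRtr
    (by rw [hfix]; exact hsum_pd) (by rw [hfix]; exact hsum_tr) (dd Ya Yb)
  rw [hfix, hfixY] at h
  exact h

/-- scaled corner embeddings -/
lemma scaled_Up (c : ℝ) (hc : 0 ≤ c) (Z : Matrix (Fin n) (Fin n) ℂ) :
    ((Real.sqrt c : ℂ) • Up n) * Z * ((Real.sqrt c : ℂ) • Up n)ᴴ = dd ((c : ℂ) • Z) 0 := by
  rw [Matrix.conjTranspose_smul, Complex.star_def, Complex.conj_ofReal,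
    Matrix.smul_mul, Matrix.smul_mul, Matrix.mul_smul, smul_smul, ← Complex.ofReal_mul,
    Real.mul_self_sqrt hc, Up_mul_mul, dd_smul, smul_zero]

lemma scaled_Lo (c : ℝ) (hc : 0 ≤ c) (Z : Matrix (Fin n) (Fin n) ℂ) :
    ((Real.sqrt c : ℂ) • Lo n) * Z * ((Real.sqrt c : ℂ) • Lo n)ᴴ = dd 0 ((c : ℂ) • Z) := by
  rw [Matrix.conjTranspose_smul, Complex.star_def, Complex.conj_ofReal,
    Matrix.smul_mul, Matrix.smul_mul, Matrix.mul_smul, smul_smul, ← Complex.ofReal_mul,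
    Real.mul_self_sqrt hc, Lo_mul_mul, dd_smul, smul_zero]

/-- The split contraction. -/
lemma split_le (hK : MonotoneMetricFamily K) {n : ℕ} {ρ : Matrix (Fin n) (Fin n) ℂ}
    (hρ : ρ.PosDef) (htr : ρ.trace.re ≤ 1) (X : Matrix (Fin n) (Fin n) ℂ)
    {p : ℝ} (hp : 0 < p) (hp1 : p < 1) :
    (K (n + n) (dd ((p : ℂ) • ρ) (((1 - p : ℝ) : ℂ) • ρ))
        (dd ((p : ℂ) • X) (((1 - p : ℝ) : ℂ) • X))
        (dd ((p : ℂ) • X) (((1 - p : ℝ) : ℂ) • X))).re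
      ≤ (K n ρ X X).re := by
  have hq : (0:ℝ) < 1 - p := by linarith
  have htre : 0 ≤ ρ.trace.re := psd_trace_re_nonneg hρ.posSemidef
  have hRpd : (dd ((p : ℂ) • ρ) (((1 - p : ℝ) : ℂ) • ρ)).PosDef :=
    dd_posDef (smul_posDef hρ hp) (smul_posDef hρ hq)
  have hRtr : (dd ((p : ℂ) • ρ) (((1 - p : ℝ) : ℂ) • ρ)).trace.re ≤ 1 := by
    rw [dd_trace, Complex.add_re, smul_trace_re, smul_trace_re]
    nlinarith
  have hT : IsCPTNI (fun Z : Matrix (Fin n) (Fin n) ℂ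
      => ((Real.sqrt p : ℂ) • Up n) * Z * ((Real.sqrt p : ℂ) • Up n)ᴴ
        + ((Real.sqrt (1 - p) : ℂ) • Lo n) * Z * ((Real.sqrt (1 - p) : ℂ) • Lo n)ᴴ) := by
    refine isCPTNI_pair _ _ ?_
    rw [Matrix.conjTranspose_smul, Complex.star_def, Complex.conj_ofReal,
      Matrix.conjTranspose_smul, Complex.star_def, Complex.conj_ofReal,
      Matrix.smul_mul, Matrix.mul_smul, smul_smul, ← Complex.ofReal_mul,
      Real.mul_self_sqrt hp.le,
      Matrix.smul_mul, Matrix.mul_smul, smul_smul, ← Complex.ofReal_mul,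
      Real.mul_self_sqrt hq.le, UpH_mul_Up, LoH_mul_Lo]
    have : ((p : ℂ)) • (1 : Matrix (Fin n) (Fin n) ℂ) + ((1 - p : ℝ) : ℂ) • 1
        = (1 : Matrix (Fin n) (Fin n) ℂ) := by
      rw [← add_smul, ← Complex.ofReal_add]
      norm_num
    rw [this, sub_self]
    exact Matrix.PosSemidef.zero
  have hfix : ((Real.sqrt p : ℂ) • Up n) * ρ * ((Real.sqrt p : ℂ) • Up n)ᴴ
          + ((Real.sqrt (1 - p) : ℂ) • Lo n) * ρ * ((Real.sqrt (1 - p) : ℂ) • Lo n)ᴴ + 0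
        = dd ((p : ℂ) • ρ) (((1 - p : ℝ) : ℂ) • ρ) := by
    rw [scaled_Up p hp.le, scaled_Lo (1 - p) hq.le, dd_add, add_zero, zero_add, add_zero]
  have hfixX : ((Real.sqrt p : ℂ) • Up n) * X * ((Real.sqrt p : ℂ) • Up n)ᴴ
          + ((Real.sqrt (1 - p) : ℂ) • Lo n) * X * ((Real.sqrt (1 - p) : ℂ) • Lo n)ᴴ
        = dd ((p : ℂ) • X) (((1 - p : ℝ) : ℂ) • X) := by
    rw [scaled_Up p hp.le, scaled_Lo (1 - p) hq.le, dd_add, add_zero, zero_add]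
  have h := hK.2 n (n + n) _ hT 0 Matrix.PosSemidef.zero ρ hρ htr
    (by rw [hfix]; exact hRpd) (by rw [hfix]; exact hRtr) X
  rw [hfix, hfixX] at h
  exact h

/-- Exact homogeneity-type bound: `p * K_{pρ}(X,X) ≤ K_ρ(X,X)`. -/
lemma crux (hK : MonotoneMetricFamily K) {n : ℕ} {ρ : Matrix (Fin n) (Fin n) ℂ}
    (hρ : ρ.PosDef) (htr : ρ.trace.re ≤ 1) (X : Matrix (Fin n) (Fin n) ℂ)
    {p : ℝ} (hp : 0 < p) (hp1 : p < 1) :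
    p * (K n ((p : ℂ) • ρ) X X).re ≤ (K n ρ X X).re := by
  have hq : (0:ℝ) < 1 - p := by linarith
  have htre : 0 ≤ ρ.trace.re := psd_trace_re_nonneg hρ.posSemidef
  have hpd_a : ((p : ℂ) • ρ).PosDef := smul_posDef hρ hp
  have hpd_b : (((1 - p : ℝ) : ℂ) • ρ).PosDef := smul_posDef hρ hq
  have htr_a : ((p : ℂ) • ρ).trace.re ≤ 1 := by
    rw [smul_trace_re]; nlinarith
  have htr_b : (((1 - p : ℝ) : ℂ) • ρ).trace.re ≤ 1 := by
    rw [smul_trace_re]; nlinarith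
  have htr_ab : ((p : ℂ) • ρ).trace.re + (((1 - p : ℝ) : ℂ) • ρ).trace.re ≤ 1 := by
    rw [smul_trace_re, smul_trace_re]; nlinarith
  by_cases hX : X = 0
  · subst hX
    rw [IP_zero (hK.1 n _ hpd_a htr_a), IP_zero (hK.1 n _ hρ htr)]
    simp
  have hIPa := hK.1 n _ hpd_a htr_a
  have hIPb := hK.1 n _ hpd_b htr_b
  set a := (K n ((p : ℂ) • ρ) X X).re with ha_def
  set b := (K n (((1 - p : ℝ) : ℂ) • ρ) X X).re with hb_def
  set k := (K n ρ X X).re with hk_def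
  have ha : 0 < a := hIPa.2.2.2.2.2 X hX
  have hb : 0 < b := hIPb.2.2.2.2.2 X hX
  -- block inequality : p² a + (1-p)² b ≤ k
  have h1 : p ^ 2 * a + (1 - p) ^ 2 * b ≤ k := by
    have h := split_le hK hρ htr X hp hp1
    rw [blockEval hK hpd_a hpd_b htr_ab] at h
    rw [IP_real_smul_re hIPa, IP_real_smul_re hIPb] at h
    exact h
  -- harmonic inequality : k ≤ s² a + t² b whenever s + t = 1
  have hhar : ∀ s t : ℝ, s + t = 1 → k ≤ s ^ 2 * a + t ^ 2 * b := by
    intro s t hst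
    have h := ptrace_le hK hpd_a hpd_b htr_ab ((s : ℂ) • X) ((t : ℂ) • X)
    have hρsum : (p : ℂ) • ρ + ((1 - p : ℝ) : ℂ) • ρ = ρ := by
      rw [← add_smul, ← Complex.ofReal_add]
      norm_num
    have hXsum : (s : ℂ) • X + (t : ℂ) • X = X := by
      rw [← add_smul, ← Complex.ofReal_add, hst, Complex.ofReal_one, one_smul]
    rw [hρsum, hXsum, blockEval hK hpd_a hpd_b htr_ab,
      IP_real_smul_re hIPa, IP_real_smul_re hIPb] at h
    exact h
  have hab : (0:ℝ) < a + b := by linarith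
  have h2 := hhar (b / (a + b)) (a / (a + b)) (by field_simp; ring)
  have h3 : k * (a + b) ≤ a * b := by
    have hval : (b / (a + b)) ^ 2 * a + (a / (a + b)) ^ 2 * b = a * b / (a + b) := by
      field_simp
      ring
    rw [hval] at h2
    rw [← le_div_iff₀ hab]
    exact h2
  have e1 : (p * a - (1 - p) * b) ^ 2 = (p ^ 2 * a + (1 - p) ^ 2 * b) * (a + b) - a * b := by
    ring
  have e2 : (p ^ 2 * a + (1 - p) ^ 2 * b) * (a + b) ≤ k * (a + b) :=
    mul_le_mul_of_nonneg_right h1 hab.le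
  have e3 : (p * a - (1 - p) * b) ^ 2 ≤ 0 := by rw [e1]; linarith
  have e4 : p * a = (1 - p) * b := by nlinarith [sq_nonneg (p * a - (1 - p) * b)]
  have e5 : p * a = p ^ 2 * a + (1 - p) ^ 2 * b := by nlinarith [e4]
  linarith

end Stmt11H

/-- for fixed `X`, the map `ρ ↦ K ρ X X` is monotonically decreasing and
convex on positive definite matrices with trace at most one. -/
theorem stmt11
    (K : (n : ℕ) → Matrix (Fin n) (Fin n) ℂ →
      Matrix (Fin n) (Fin n) ℂ → Matrix (Fin n) (Fin n) ℂ → ℂ)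
    (hK : MonotoneMetricFamily K)
    (n : ℕ) (X : Matrix (Fin n) (Fin n) ℂ) :
    (∀ (ρ ρ' : Matrix (Fin n) (Fin n) ℂ), ρ.PosDef → ρ'.PosDef → ρ'.trace.re ≤ 1 →
      (ρ' - ρ).PosSemidef → (K n ρ' X X).re ≤ (K n ρ X X).re) ∧
    (∀ (ρ₁ ρ₂ : Matrix (Fin n) (Fin n) ℂ) (p : ℝ),
      ρ₁.PosDef → ρ₂.PosDef → ρ₁.trace.re ≤ 1 → ρ₂.trace.re ≤ 1 →
      0 ≤ p → p ≤ 1 →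
      (K n (((p : ℝ) : ℂ) • ρ₁ + (((1 - p : ℝ)) : ℂ) • ρ₂) X X).re ≤
        p * (K n ρ₁ X X).re + (1 - p) * (K n ρ₂ X X).re) := by
  constructor
  · -- monotonicity
    intro ρ ρ' hρ hρ' htr' hσ
    have hT : IsCPTNI (fun Z : Matrix (Fin n) (Fin n) ℂ
        => (1 : Matrix (Fin n) (Fin n) ℂ) * Z * (1 : Matrix (Fin n) (Fin n) ℂ)ᴴ) :=
      Stmt11H.isCPTNI_single _
        (by rw [Matrix.conjTranspose_one, Matrix.one_mul, sub_self]; exact Matrix.PosSemidef.zero)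
    have htrρ : ρ.trace.re ≤ 1 := by
      have h1 : (ρ' - ρ).trace = ρ'.trace - ρ.trace := Matrix.trace_sub _ _
      have h2 : 0 ≤ (ρ' - ρ).trace.re := Stmt11H.psd_trace_re_nonneg hσ
      rw [h1, Complex.sub_re] at h2
      linarith
    have hfix : (1 : Matrix (Fin n) (Fin n) ℂ) * ρ * (1 : Matrix (Fin n) (Fin n) ℂ)ᴴ + (ρ' - ρ)
        = ρ' := by
      rw [Matrix.conjTranspose_one, Matrix.one_mul, Matrix.mul_one]
      abel
    have hfixX : (1 : Matrix (Fin n) (Fin n) ℂ) * X * (1 : Matrix (Fin n) (Fin n) ℂ)ᴴ = X := by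
      rw [Matrix.conjTranspose_one, Matrix.one_mul, Matrix.mul_one]
    have h := hK.2 n n _ hT (ρ' - ρ) hσ ρ hρ htrρ
      (by rw [hfix]; exact hρ') (by rw [hfix]; exact htr') X
    rw [hfix, hfixX] at h
    exact h
  · -- convexity
    intro ρ₁ ρ₂ p h1 h2 ht1 ht2 hp0 hp1
    by_cases hp : p = 0
    · subst hp
      norm_num
    by_cases hp' : p = 1
    · subst hp'
      norm_num
    have hp0' : 0 < p := lt_of_le_of_ne hp0 (Ne.symm hp)
    have hp1' : p < 1 := lt_of_le_of_ne hp1 hp'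
    have hq : (0:ℝ) < 1 - p := by linarith
    have hpd_a : ((p : ℂ) • ρ₁).PosDef := Stmt11H.smul_posDef h1 hp0'
    have hpd_b : (((1 - p : ℝ) : ℂ) • ρ₂).PosDef := Stmt11H.smul_posDef h2 hq
    have ht1' : 0 ≤ ρ₁.trace.re := Stmt11H.psd_trace_re_nonneg h1.posSemidef
    have ht2' : 0 ≤ ρ₂.trace.re := Stmt11H.psd_trace_re_nonneg h2.posSemidef
    have htr_ab : ((p : ℂ) • ρ₁).trace.re + (((1 - p : ℝ) : ℂ) • ρ₂).trace.re ≤ 1 := by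
      rw [Stmt11H.smul_trace_re, Stmt11H.smul_trace_re]; nlinarith
    have hstep1 := Stmt11H.ptrace_le hK hpd_a hpd_b htr_ab ((p : ℂ) • X) (((1 - p : ℝ) : ℂ) • X)
    have hXsum : (p : ℂ) • X + ((1 - p : ℝ) : ℂ) • X = X := by
      rw [← add_smul, ← Complex.ofReal_add]
      norm_num
    rw [hXsum, Stmt11H.blockEval hK hpd_a hpd_b htr_ab] at hstep1
    have hIPa := hK.1 n _ hpd_a (by rw [Stmt11H.smul_trace_re]; nlinarith)
    have hIPb := hK.1 n _ hpd_b (by rw [Stmt11H.smul_trace_re]; nlinarith)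
    rw [Stmt11H.IP_real_smul_re hIPa, Stmt11H.IP_real_smul_re hIPb] at hstep1
    have hc1 := Stmt11H.crux hK h1 ht1 X hp0' hp1'
    have hc2 := Stmt11H.crux hK h2 ht2 X hq (by linarith : (1:ℝ) - p < 1)
    nlinarith [hstep1, hc1, hc2, hp0', hq,
      mul_le_mul_of_nonneg_left hc1 hp0'.le,
      mul_le_mul_of_nonneg_left hc2 hq.le]
end
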